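/- arXiv:1003.1035 — 6 statements merged into one kernel-verified Lean document; each statement's English description precedes it below -/
import Mathlib

section
/- Let (X,d) be a metric space, p ∈ [1,∞), s > 0 and C > 0. Let μ be a compactly supported Borel probability measure on X such that for every x ∈ supp μ and every r ≤ diam(supp μ) one has μ(B(x,r)) ≥ C⁻¹ rˢ. Then for every positive integer N, W_p(μ, Δ_N) ≤ 5 C^{1/s} / N^{1/s}. -/
open MeasureTheory Metric Filter
open scoped ENNReal

noncomputable section

/-- A transport plan (coupling) between two measures. -/
def IsCoupling {X : Type*} [MeasurableSpace X] (μ ν : Measure X) (π : Measure (X × X)) : Prop :=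
  π.map Prod.fst = μ ∧ π.map Prod.snd = ν

/-- The `L^p` Wasserstein distance between two measures of equal mass. -/
def Wp {X : Type*} [PseudoMetricSpace X] [MeasurableSpace X] (p : ℝ) (μ ν : Measure X) : ℝ≥0∞ :=
  ⨅ (π : Measure (X × X)) (_ : IsCoupling μ ν π),
    (∫⁻ z, edist z.1 z.2 ^ p ∂π) ^ (1 / p)

/-- A measure is supported on at most `N` points. -/
def FinSupported {X : Type*} [MeasurableSpace X] (N : ℕ) (ν : Measure X) : Prop :=
  ∃ S : Finset X, S.card ≤ N ∧ ν ((S : Set X))ᶜ = 0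

/-- The `L^p` Wasserstein distance from `μ` to the set `Δ_N` of measures supported
on at most `N` points and having the same total mass as `μ`. -/
def WpDelta {X : Type*} [PseudoMetricSpace X] [MeasurableSpace X]
    (p : ℝ) (μ : Measure X) (N : ℕ) : ℝ≥0∞ :=
  ⨅ (ν : Measure X) (_ : FinSupported N ν ∧ ν Set.univ = μ Set.univ), Wp p μ ν

/-- The (topological) support of a measure: points all of whose open neighborhoods
have positive measure. -/
def measSupport {X : Type*} [TopologicalSpace X] [MeasurableSpace X] (μ : Measure X) : Set X :=
  {x | ∀ U : Set X, IsOpen U → x ∈ U → 0 < μ U}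

/-- If a measure is null outside a compact set, then it is null outside its topological
support. -/
lemma measSupport_compl_null {X : Type*} [MetricSpace X] [MeasurableSpace X] [BorelSpace X]
    (μ : Measure X) {K : Set X} (hK : IsCompact K) (hK0 : μ Kᶜ = 0) :
    μ (measSupport μ)ᶜ = 0 := by
  classical
  obtain ⟨D, Dcount, Ddense⟩ := hK.isSeparable
  set V : Set X := ⋃ d ∈ D, ⋃ q : ℚ, ⋃ _ : μ (ball d (q : ℝ)) = 0, ball d (q : ℝ) with hV
  have hVnull : μ V = 0 := by
    refine (measure_biUnion_null_iff Dcount).2 fun d _ => ?_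
    refine measure_iUnion_null fun q => ?_
    exact measure_iUnion_null fun h => h
  have hsub : (measSupport μ)ᶜ ⊆ V ∪ Kᶜ := by
    intro x hx
    by_cases hxK : x ∈ K
    · left
      simp only [measSupport, Set.mem_compl_iff, Set.mem_setOf_eq, not_forall] at hx
      obtain ⟨U, hUo, hxU, hU0⟩ := hx
      have hU0' : μ U = 0 := by
        simpa using (not_lt.1 hU0)
      obtain ⟨ε, hε, hball⟩ := Metric.isOpen_iff.1 hUo x hxU
      obtain ⟨d, hd, hxd⟩ := Metric.mem_closure_iff.1 (Ddense hxK) (ε / 3) (by linarith)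
      obtain ⟨q, hq1, hq2⟩ := exists_rat_btwn (show ε / 3 < ε / 2 by linarith)
      have hq0 : μ (ball d (q : ℝ)) = 0 := by
        refine measure_mono_null (fun y hy => hball ?_) hU0'
        rw [mem_ball] at hy ⊢
        have h1 : dist y x ≤ dist y d + dist d x := dist_triangle _ _ _
        rw [dist_comm] at hxd
        linarith
      refine Set.mem_biUnion hd ?_
      refine Set.mem_iUnion.2 ⟨q, Set.mem_iUnion.2 ⟨hq0, ?_⟩⟩
      exact mem_ball.2 (by linarith)
    · right; exact hxK
  refine nonpos_iff_eq_zero.1 ?_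
  calc μ (measSupport μ)ᶜ ≤ μ (V ∪ Kᶜ) := measure_mono hsub
    _ ≤ μ V + μ Kᶜ := measure_union_le _ _
    _ = 0 := by rw [hVnull, hK0, add_zero]

theorem wasserstein_le_of_lower_regular
    {X : Type*} [MetricSpace X] [MeasurableSpace X] [BorelSpace X]
    (p : ℝ) (hp : 1 ≤ p) (s : ℝ) (hs : 0 < s) (C : ℝ) (hC : 0 < C)
    (μ : Measure X) [IsProbabilityMeasure μ]
    (hμc : ∃ K : Set X, IsCompact K ∧ μ Kᶜ = 0)
    (hreg : ∀ x ∈ measSupport μ, ∀ r : ℝ, 0 < r → r ≤ diam (measSupport μ) →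
      ENNReal.ofReal (C⁻¹ * r ^ s) ≤ μ (closedBall x r))
    (N : ℕ) (hN : 0 < N) :
    WpDelta p μ N ≤ ENNReal.ofReal (5 * C ^ (1 / s) / (N : ℝ) ^ (1 / s)) := by
  classical
  obtain ⟨K, hK, hK0⟩ := hμc
  have hsupp0 : μ (measSupport μ)ᶜ = 0 := measSupport_compl_null μ hK hK0
  have hsuppK : measSupport μ ⊆ K := by
    intro x hx
    by_contra h
    exact absurd hK0 (hx Kᶜ hK.isClosed.isOpen_compl h).ne'
  have hbdd : Bornology.IsBounded (measSupport μ) := hK.isBounded.subset hsuppK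
  have hNR : (0 : ℝ) < N := Nat.cast_pos.2 hN
  set t : ℝ := (C / N) ^ (1 / s) with ht_def
  have ht : 0 < t := Real.rpow_pos_of_pos (div_pos hC hNR) _
  set r : ℝ := 2 * t with hr_def
  have hr : 0 < r := by positivity
  have hts : C⁻¹ * t ^ s = 1 / (N : ℝ) := by
    have h1 : t ^ s = C / N := by
      rw [ht_def, ← Real.rpow_mul (div_nonneg hC.le hNR.le), one_div_mul_cancel hs.ne',
        Real.rpow_one]
    rw [h1]
    field_simp
  -- Counting lemma: any `r`-separated subset of the support has at most `N` points.
  have count : ∀ F : Finset X, ↑F ⊆ measSupport μ →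
      (∀ x ∈ F, ∀ y ∈ F, x ≠ y → r < dist x y) → F.card ≤ N := by
    intro F hFs hFsep
    by_cases hF1 : F.card ≤ 1
    · exact hF1.trans hN
    push_neg at hF1
    obtain ⟨a, ha, b, hb, hab⟩ := Finset.one_lt_card.1 hF1
    have htd : t ≤ diam (measSupport μ) := by
      have h1 : dist a b ≤ diam (measSupport μ) :=
        Metric.dist_le_diam_of_mem hbdd (hFs ha) (hFs hb)
      have h2 : r < dist a b := hFsep a ha b hb hab
      rw [hr_def] at h2
      linarith
    have hball : ∀ x ∈ F, ((N : ℝ≥0∞))⁻¹ ≤ μ (closedBall x t) := by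
      intro x hx
      have h := hreg x (hFs hx) t ht htd
      rwa [hts, one_div, ENNReal.ofReal_inv_of_pos hNR, ENNReal.ofReal_natCast] at h
    have hdisj : (↑F : Set X).PairwiseDisjoint (fun x => closedBall x t) := by
      intro x hx y hy hxy
      refine closedBall_disjoint_closedBall ?_
      have h := hFsep x hx y hy hxy
      rw [hr_def] at h
      linarith
    have hle : (F.card : ℝ≥0∞) * ((N : ℝ≥0∞))⁻¹ ≤ 1 := by
      calc (F.card : ℝ≥0∞) * ((N : ℝ≥0∞))⁻¹ = ∑ _x ∈ F, ((N : ℝ≥0∞))⁻¹ := by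
            rw [Finset.sum_const, nsmul_eq_mul]
        _ ≤ ∑ x ∈ F, μ (closedBall x t) := Finset.sum_le_sum hball
        _ = μ (⋃ x ∈ F, closedBall x t) :=
            (measure_biUnion_finset hdisj fun x _ => measurableSet_closedBall).symm
        _ ≤ μ Set.univ := measure_mono (Set.subset_univ _)
        _ = 1 := measure_univ
    have hNne : ((N : ℝ≥0∞)) ≠ 0 := Nat.cast_ne_zero.2 hN.ne'
    have h2 := mul_le_mul_left hle (N : ℝ≥0∞)
    rw [one_mul, mul_assoc, ENNReal.inv_mul_cancel hNne (ENNReal.natCast_ne_top N), mul_one] at h2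
    exact_mod_cast h2
  -- the support is nonempty
  have hsuppne : (measSupport μ).Nonempty := by
    rw [Set.nonempty_iff_ne_empty]
    intro h
    have h1 : (1 : ℝ≥0∞) = 0 := by
      rw [← measure_univ (μ := μ), ← Set.compl_empty, ← h]
      exact hsupp0
    exact one_ne_zero h1
  -- a maximal `r`-separated subset of the support
  set Sep : Finset X → Prop := fun F =>
    ↑F ⊆ measSupport μ ∧ ∀ x ∈ F, ∀ y ∈ F, x ≠ y → r < dist x y with hSep
  have h0 : (0 : ℕ) ∈ {k | ∃ F, Sep F ∧ F.card = k} := ⟨∅, ⟨by simp, by simp⟩, rfl⟩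
  have hbd : BddAbove {k | ∃ F, Sep F ∧ F.card = k} := by
    refine ⟨N, fun k hk => ?_⟩
    obtain ⟨F, hF, hcard⟩ := hk
    exact hcard ▸ count F hF.1 hF.2
  obtain ⟨S, hSsep, hScard⟩ := Nat.sSup_mem ⟨0, h0⟩ hbd
  have hcover : ∀ y ∈ measSupport μ, ∃ x ∈ S, dist y x ≤ r := by
    intro y hy
    by_contra h
    push_neg at h
    have hyS : y ∉ S := by
      intro hyS
      have := h y hyS
      rw [dist_self] at this
      linarith
    have hins : Sep (insert y S) := by
      constructor
      · rw [Finset.coe_insert]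
        exact Set.insert_subset hy hSsep.1
      · intro a ha b hb hab
        rcases Finset.mem_insert.1 ha with rfl | ha'
        · rcases Finset.mem_insert.1 hb with rfl | hb'
          · exact absurd rfl hab
          · exact h b hb'
        · rcases Finset.mem_insert.1 hb with rfl | hb'
          · rw [dist_comm]; exact h a ha'
          · exact hSsep.2 a ha' b hb' hab
    have hmem : S.card + 1 ∈ {k | ∃ F, Sep F ∧ F.card = k} :=
      ⟨insert y S, hins, Finset.card_insert_of_notMem hyS⟩
    have hle := le_csSup hbd hmem
    rw [← hScard] at hle
    omega
  -- enumerate the centers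
  set m : ℕ := S.card with hm
  set c : Fin m → X := fun i => ((S.equivFin.symm i : S) : X) with hc
  have hcS : ∀ i, c i ∈ S := fun i => (S.equivFin.symm i).2
  have hsurj : ∀ x ∈ S, ∃ i, c i = x := by
    intro x hx
    exact ⟨S.equivFin ⟨x, hx⟩, by simp [hc]⟩
  -- the disjointified system of balls
  set A : Fin m → Set X := fun i =>
    closedBall (c i) r \ ⋃ j, ⋃ _ : j < i, closedBall (c j) r with hA
  have hAm : ∀ i, MeasurableSet (A i) := fun i =>
    measurableSet_closedBall.diff
      (MeasurableSet.iUnion fun j => MeasurableSet.iUnion fun _ => measurableSet_closedBall)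
  have hAsub : ∀ i, A i ⊆ closedBall (c i) r := fun i => Set.diff_subset
  have hAdisj : ∀ i j : Fin m, i ≠ j → Disjoint (A i) (A j) := by
    have key : ∀ i j : Fin m, i < j → Disjoint (A i) (A j) := by
      intro i j hij
      rw [Set.disjoint_left]
      intro x hxi hxj
      exact hxj.2 (Set.mem_iUnion.2 ⟨i, Set.mem_iUnion.2 ⟨hij, hxi.1⟩⟩)
    intro i j hij
    rcases hij.lt_or_gt with h | h
    · exact key i j h
    · exact (key j i h).symm
  have hAU : (⋃ i, A i) = ⋃ i, closedBall (c i) r := by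
    apply Set.Subset.antisymm (Set.iUnion_mono fun i => Set.diff_subset)
    intro x hx
    have hne : (Finset.univ.filter fun j => x ∈ closedBall (c j) r).Nonempty := by
      obtain ⟨j, hj⟩ := Set.mem_iUnion.1 hx
      exact ⟨j, Finset.mem_filter.2 ⟨Finset.mem_univ _, hj⟩⟩
    set i := (Finset.univ.filter fun j => x ∈ closedBall (c j) r).min' hne with hi
    have hxi : x ∈ closedBall (c i) r :=
      (Finset.mem_filter.1 ((Finset.univ.filter _).min'_mem hne)).2
    refine Set.mem_iUnion.2 ⟨i, hxi, ?_⟩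
    intro hmem
    obtain ⟨j, hj⟩ := Set.mem_iUnion.1 hmem
    obtain ⟨hji, hxj⟩ := Set.mem_iUnion.1 hj
    have hij : i ≤ j := Finset.min'_le _ j (Finset.mem_filter.2 ⟨Finset.mem_univ _, hxj⟩)
    exact absurd hij (not_le.2 hji)
  have hcoverU : measSupport μ ⊆ ⋃ i, closedBall (c i) r := by
    intro y hy
    obtain ⟨x, hxS, hxd⟩ := hcover y hy
    obtain ⟨i, rfl⟩ := hsurj x hxS
    exact Set.mem_iUnion.2 ⟨i, mem_closedBall.2 hxd⟩
  have hfull : μ (⋃ i, A i)ᶜ = 0 := by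
    refine measure_mono_null ?_ hsupp0
    rw [hAU]
    exact Set.compl_subset_compl.2 hcoverU
  -- the coupling
  set π : Measure (X × X) :=
    ∑ i : Fin m, (μ.restrict (A i)).map (fun x => (x, c i)) with hπ
  have hfi : ∀ i : Fin m, Measurable fun x : X => (x, c i) := fun i =>
    measurable_id.prodMk measurable_const
  have hfst : π.map Prod.fst = μ := by
    ext u hu
    rw [Measure.map_apply measurable_fst hu, hπ, Measure.finset_sum_apply]
    have hterm : ∀ i : Fin m,
        ((μ.restrict (A i)).map fun x => (x, c i)) (Prod.fst ⁻¹' u) = μ (u ∩ A i) := by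
      intro i
      rw [Measure.map_apply (hfi i) (measurable_fst hu),
        Measure.restrict_apply ((hfi i) (measurable_fst hu))]
      congr 1
    rw [Finset.sum_congr rfl fun i _ => hterm i]
    calc ∑ i : Fin m, μ (u ∩ A i)
        = μ (⋃ i ∈ (Finset.univ : Finset (Fin m)), u ∩ A i) := by
          refine (measure_biUnion_finset ?_ fun i _ => hu.inter (hAm i)).symm
          intro i _ j _ hij
          exact (hAdisj i j hij).mono Set.inter_subset_right Set.inter_subset_right
      _ = μ (u ∩ ⋃ i, A i) := by
          congr 1
          ext x
          simp
      _ = μ u := measure_inter_conull hfull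
  set ν : Measure X := π.map Prod.snd with hν
  have hcpl : IsCoupling μ ν π := ⟨hfst, rfl⟩
  have hνuniv : ν Set.univ = μ Set.univ := by
    rw [hν, ← hfst, Measure.map_apply measurable_snd MeasurableSet.univ,
      Measure.map_apply measurable_fst MeasurableSet.univ]
    simp
  have hSmeas : MeasurableSet (↑S : Set X) := S.finite_toSet.isClosed.measurableSet
  have hfin : FinSupported N ν := by
    refine ⟨S, count S hSsep.1 hSsep.2, ?_⟩
    rw [hν, Measure.map_apply measurable_snd hSmeas.compl, hπ, Measure.finset_sum_apply]
    refine Finset.sum_eq_zero fun i _ => ?_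
    rw [Measure.map_apply (hfi i) (measurable_snd hSmeas.compl)]
    have hpre : (fun x : X => (x, c i)) ⁻¹' (Prod.snd ⁻¹' (↑S : Set X)ᶜ) = ∅ := by
      ext x
      simp [hcS i]
    rw [hpre]
    simp
  -- the transport cost
  have hcost : (∫⁻ z, edist z.1 z.2 ^ p ∂π) ≤ ENNReal.ofReal r ^ p := by
    rw [hπ, lintegral_finset_sum_measure]
    have hterm : ∀ i : Fin m,
        (∫⁻ z, edist z.1 z.2 ^ p ∂((μ.restrict (A i)).map fun x => (x, c i)))
          ≤ ENNReal.ofReal r ^ p * μ (A i) := by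
      intro i
      rw [(measurableEmbedding_prod_mk_right (c i)).lintegral_map]
      calc ∫⁻ x, edist x (c i) ^ p ∂(μ.restrict (A i))
          ≤ ∫⁻ _x in A i, ENNReal.ofReal r ^ p ∂μ := by
            refine setLIntegral_mono measurable_const fun x hx => ?_
            have hd : dist x (c i) ≤ r := mem_closedBall.1 (hAsub i hx)
            have he : edist x (c i) ≤ ENNReal.ofReal r := by
              rw [edist_dist]
              exact ENNReal.ofReal_le_ofReal hd
            exact ENNReal.rpow_le_rpow he (le_trans zero_le_one hp)
        _ = ENNReal.ofReal r ^ p * μ (A i) := setLIntegral_const _ _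
    calc ∑ i : Fin m, ∫⁻ z, edist z.1 z.2 ^ p ∂((μ.restrict (A i)).map fun x => (x, c i))
        ≤ ∑ i : Fin m, ENNReal.ofReal r ^ p * μ (A i) := Finset.sum_le_sum fun i _ => hterm i
      _ = ENNReal.ofReal r ^ p * ∑ i : Fin m, μ (A i) := by rw [← Finset.mul_sum]
      _ = ENNReal.ofReal r ^ p * μ (⋃ i ∈ (Finset.univ : Finset (Fin m)), A i) := by
          rw [measure_biUnion_finset (fun i _ j _ hij => hAdisj i j hij) fun i _ => hAm i]
      _ ≤ ENNReal.ofReal r ^ p * 1 := by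
          refine mul_le_mul_right ?_ _
          exact (measure_mono (Set.subset_univ _)).trans_eq measure_univ
      _ = ENNReal.ofReal r ^ p := mul_one _
  have hp0 : p ≠ 0 := by positivity
  have hWp : Wp p μ ν ≤ ENNReal.ofReal r := by
    have h1 : Wp p μ ν ≤ (∫⁻ z, edist z.1 z.2 ^ p ∂π) ^ (1 / p) := iInf₂_le π hcpl
    refine h1.trans ?_
    calc (∫⁻ z, edist z.1 z.2 ^ p ∂π) ^ (1 / p)
        ≤ (ENNReal.ofReal r ^ p) ^ (1 / p) := ENNReal.rpow_le_rpow hcost (by positivity)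
      _ = ENNReal.ofReal r := by
          rw [← ENNReal.rpow_mul, mul_one_div_cancel hp0, ENNReal.rpow_one]
  have hWD : WpDelta p μ N ≤ Wp p μ ν := iInf₂_le ν ⟨hfin, hνuniv⟩
  refine hWD.trans (hWp.trans ?_)
  apply ENNReal.ofReal_le_ofReal
  have hCN : (C / N) ^ (1 / s) = C ^ (1 / s) / (N : ℝ) ^ (1 / s) :=
    Real.div_rpow hC.le hNR.le _
  rw [hr_def, ht_def, hCN, mul_div_assoc]
  have hq : 0 ≤ C ^ (1 / s) / (N : ℝ) ^ (1 / s) := by positivity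
  linarith
end
end

section
/- Let (X,d) be a metric space, p ∈ [1,∞), s > 0 and C > 0. Let μ be a Borel probability measure on X such that for every x ∈ X and every r > 0 one has μ(B(x,r)) ≤ C rˢ. Then for every positive integer N, W_p(μ, Δ_N) ≥ (s/(s+p))^{1/p} · C^{-1/s} · N^{-1/s}. -/
open MeasureTheory Metric Filter
open scoped ENNReal

noncomputable section

open Set in
private theorem aux_wasserstein_main
    {X : Type*} [MetricSpace X] [MeasurableSpace X] [BorelSpace X]
    (p : ℝ) (hp : 1 ≤ p) (s : ℝ) (hs : 0 < s) (C : ℝ) (hC : 0 < C)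
    (μ : Measure X) [IsProbabilityMeasure μ]
    (hreg : ∀ x : X, ∀ r : ℝ, 0 < r → μ (closedBall x r) ≤ ENNReal.ofReal (C * r ^ s))
    (N : ℕ) (hN : 0 < N)
    (S : Finset X) (hScard : S.card ≤ N) (π : Measure (X × X))
    (hπ1 : π.map Prod.fst = μ) (hπ2 : (π.map Prod.snd) ((S : Set X))ᶜ = 0)
    (hSne : S.Nonempty) :
    ENNReal.ofReal ((s / (s + p)) ^ (1 / p) * C ^ (-(1 / s)) * (N : ℝ) ^ (-(1 / s)))
      ≤ (∫⁻ z, edist z.1 z.2 ^ p ∂π) ^ (1 / p) := by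
  have hp0 : (0:ℝ) < p := lt_of_lt_of_le one_pos hp
  set a : ℝ := C * N with ha_def
  have ha : 0 < a := mul_pos hC (Nat.cast_pos.mpr hN)
  set r0 : ℝ := a ^ (-(1/s)) with hr0_def
  have hr0 : 0 < r0 := Real.rpow_pos_of_pos ha _
  have hs' : s ≠ 0 := hs.ne'
  have har0 : a * r0 ^ s = 1 := by
    rw [hr0_def, ← Real.rpow_mul ha.le]
    have : -(1/s) * s = -1 := by field_simp
    rw [this, Real.rpow_neg_one, mul_inv_cancel₀ ha.ne']
  -- f : distance to S
  have hSne' : (S : Set X).Nonempty := hSne.to_set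
  set f : X → ℝ := fun x => infDist x (S : Set X) with hf_def
  have hf_cont : Continuous f := continuous_infDist_pt _
  have hf_nn : ∀ x, 0 ≤ f x := fun x => infDist_nonneg
  -- Step A : pass from π to μ
  have hSmeas : MeasurableSet (S : Set X) := S.finite_toSet.isClosed.measurableSet
  have haes : ∀ᵐ z ∂π, z.2 ∈ (S : Set X) := by
    rw [ae_iff]
    have : {z : X × X | ¬ z.2 ∈ (S : Set X)} = Prod.snd ⁻¹' ((S : Set X))ᶜ := rfl
    rw [this, ← Measure.map_apply measurable_snd hSmeas.compl, hπ2]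
  have stepA : ∫⁻ x, ENNReal.ofReal (f x ^ p) ∂μ ≤ ∫⁻ z, edist z.1 z.2 ^ p ∂π := by
    have hmble : Measurable fun x => ENNReal.ofReal (f x ^ p) :=
      ((hf_cont.rpow_const (fun x => Or.inr hp0.le)).measurable).ennreal_ofReal
    rw [← hπ1, lintegral_map hmble measurable_fst]
    refine lintegral_mono_ae ?_
    filter_upwards [haes] with z hz
    have h1 : ENNReal.ofReal (f z.1 ^ p) = ENNReal.ofReal (f z.1) ^ p := by
      rw [← ENNReal.ofReal_rpow_of_nonneg (hf_nn _) hp0.le]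
    rw [h1]
    refine ENNReal.rpow_le_rpow ?_ hp0.le
    have : EMetric.infEdist z.1 (S : Set X) = ENNReal.ofReal (f z.1) := by
      simp only [hf_def]
      rw [infDist, ENNReal.ofReal_toReal (infEdist_ne_top hSne')]
      rfl
    rw [← this]
    exact EMetric.infEdist_le_edist_of_mem hz
  -- Step B : layer cake
  have layer : ∫⁻ x, ENNReal.ofReal (f x ^ p) ∂μ =
      ENNReal.ofReal p * ∫⁻ t in Ioi 0, μ {x | t < f x} * ENNReal.ofReal (t ^ (p - 1)) :=
    lintegral_rpow_eq_lintegral_meas_lt_mul μ (ae_of_all _ hf_nn)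
      hf_cont.measurable.aemeasurable hp0
  -- Step D : pointwise bound on (0, r0)
  have stepD : ∀ t ∈ Ioo (0:ℝ) r0,
      ENNReal.ofReal ((1 - a * t ^ s) * t ^ (p - 1)) ≤
        μ {x | t < f x} * ENNReal.ofReal (t ^ (p - 1)) := by
    intro t ht
    obtain ⟨ht0, htr⟩ := ht
    have hts : a * t ^ s ≤ 1 := by
      calc a * t ^ s ≤ a * r0 ^ s := by
            exact mul_le_mul_of_nonneg_left
              (Real.rpow_le_rpow ht0.le htr.le hs.le) ha.le
        _ = 1 := har0
    have hsub : {x | f x ≤ t} ⊆ ⋃ y ∈ S, closedBall y t := by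
      intro x hx
      simp only [hf_def, mem_setOf_eq] at hx
      obtain ⟨y, hyS, hy⟩ := (S.finite_toSet.isCompact).exists_infDist_eq_dist hSne' x
      refine mem_biUnion hyS ?_
      rw [mem_closedBall, ← hy]
      exact hx
    have hle : μ {x | f x ≤ t} ≤ ENNReal.ofReal (a * t ^ s) := by
      calc μ {x | f x ≤ t} ≤ μ (⋃ y ∈ S, closedBall y t) := measure_mono hsub
        _ ≤ ∑ y ∈ S, μ (closedBall y t) := measure_biUnion_finset_le _ _
        _ ≤ ∑ _y ∈ S, ENNReal.ofReal (C * t ^ s) :=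
            Finset.sum_le_sum fun y _ => hreg y t ht0
        _ = S.card * ENNReal.ofReal (C * t ^ s) := by
            rw [Finset.sum_const, nsmul_eq_mul]
        _ ≤ N * ENNReal.ofReal (C * t ^ s) := by
            exact mul_le_mul_left (by exact_mod_cast Nat.cast_le.mpr hScard) _
        _ = ENNReal.ofReal (a * t ^ s) := by
            rw [ha_def, ← ENNReal.ofReal_natCast N, ← ENNReal.ofReal_mul (Nat.cast_nonneg N)]
            ring_nf
    have hcompl : μ {x | t < f x} = 1 - μ {x | f x ≤ t} := by
      have hms : MeasurableSet {x | f x ≤ t} :=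
        measurableSet_le hf_cont.measurable measurable_const
      have : {x | t < f x} = {x | f x ≤ t}ᶜ := by ext x; simp [not_le]
      rw [this, measure_compl hms (measure_ne_top μ _), measure_univ]
    have h1 : ENNReal.ofReal (1 - a * t ^ s) ≤ μ {x | t < f x} := by
      rw [hcompl, ENNReal.ofReal_sub _ (by positivity), ENNReal.ofReal_one]
      exact tsub_le_tsub_left hle _
    rw [ENNReal.ofReal_mul (by linarith)]
    exact mul_le_mul_left h1 _
  -- Step E : compute the lower bound integral
  have hintg1 : IntervalIntegrable (fun t : ℝ => t ^ (p-1)) volume 0 r0 :=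
    intervalIntegral.intervalIntegrable_rpow' (by linarith)
  have hintg2 : IntervalIntegrable (fun t : ℝ => t ^ (s+p-1)) volume 0 r0 :=
    intervalIntegral.intervalIntegrable_rpow' (by linarith)
  have hintg : IntervalIntegrable (fun t : ℝ => t ^ (p-1) - a * t ^ (s+p-1)) volume 0 r0 :=
    hintg1.sub (hintg2.const_mul a)
  have hIoo : IntegrableOn (fun t : ℝ => t ^ (p-1) - a * t ^ (s+p-1)) (Ioo 0 r0) volume :=
    ((intervalIntegrable_iff_integrableOn_Ioc_of_le hr0.le).mp hintg).mono_set Ioo_subset_Ioc_self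
  have hcongr : ∀ t ∈ Ioo (0:ℝ) r0, (1 - a * t ^ s) * t ^ (p - 1)
      = t ^ (p-1) - a * t ^ (s+p-1) := by
    intro t ht
    have : t ^ (s + p - 1) = t ^ s * t ^ (p - 1) := by
      rw [← Real.rpow_add ht.1]; ring_nf
    rw [this]; ring
  have hval : ∫ t in Ioo (0:ℝ) r0, ((1 - a * t ^ s) * t ^ (p - 1))
      = r0 ^ p * (s / (p * (s + p))) := by
    rw [setIntegral_congr_fun measurableSet_Ioo hcongr,
        ← integral_Ioc_eq_integral_Ioo,
        ← intervalIntegral.integral_of_le hr0.le]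
    rw [intervalIntegral.integral_sub hintg1 (hintg2.const_mul a),
        intervalIntegral.integral_const_mul,
        integral_rpow (Or.inl (by linarith : (-1:ℝ) < p - 1)),
        integral_rpow (Or.inl (by linarith : (-1:ℝ) < s + p - 1))]
    have h1 : p - 1 + 1 = p := by ring
    have h2 : s + p - 1 + 1 = s + p := by ring
    rw [h1, h2, Real.zero_rpow hp0.ne', Real.zero_rpow (by linarith : s + p ≠ 0)]
    have h3 : r0 ^ (s + p) = r0 ^ s * r0 ^ p := by
      rw [← Real.rpow_add hr0]
    rw [h3]
    simp only [sub_zero]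
    rw [← mul_div_assoc, ← mul_assoc, har0, one_mul]
    field_simp
    ring
  have stepE : ENNReal.ofReal (r0 ^ p * (s / (p * (s + p)))) ≤
      ∫⁻ t in Ioi 0, μ {x | t < f x} * ENNReal.ofReal (t ^ (p - 1)) := by
    rw [← hval]
    have hgnn : 0 ≤ᵐ[volume.restrict (Ioo (0:ℝ) r0)]
        fun t => (1 - a * t ^ s) * t ^ (p - 1) := by
      filter_upwards [self_mem_ae_restrict measurableSet_Ioo] with t ht
      have hts : a * t ^ s ≤ 1 := by
        calc a * t ^ s ≤ a * r0 ^ s :=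
              mul_le_mul_of_nonneg_left (Real.rpow_le_rpow ht.1.le ht.2.le hs.le) ha.le
          _ = 1 := har0
      exact mul_nonneg (by linarith) (Real.rpow_nonneg ht.1.le (p-1))
    have hint' : IntegrableOn (fun t : ℝ => (1 - a * t ^ s) * t ^ (p - 1)) (Ioo 0 r0) volume :=
      hIoo.congr_fun (fun t ht => (hcongr t ht).symm) measurableSet_Ioo
    rw [ofReal_integral_eq_lintegral_ofReal hint' hgnn]
    calc ∫⁻ t in Ioo (0:ℝ) r0, ENNReal.ofReal ((1 - a * t ^ s) * t ^ (p - 1))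
        ≤ ∫⁻ t in Ioo (0:ℝ) r0, μ {x | t < f x} * ENNReal.ofReal (t ^ (p - 1)) := by
          refine lintegral_mono_ae ?_
          filter_upwards [self_mem_ae_restrict measurableSet_Ioo] with t ht
          exact stepD t ht
      _ ≤ ∫⁻ t in Ioi 0, μ {x | t < f x} * ENNReal.ofReal (t ^ (p - 1)) :=
          lintegral_mono_set (fun t ht => ht.1)
  -- combine
  have key : ENNReal.ofReal (s / (s + p) * r0 ^ p) ≤ ∫⁻ z, edist z.1 z.2 ^ p ∂π := by
    refine le_trans ?_ stepA
    rw [layer]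
    calc ENNReal.ofReal (s / (s + p) * r0 ^ p)
        = ENNReal.ofReal p * ENNReal.ofReal (r0 ^ p * (s / (p * (s + p)))) := by
          rw [← ENNReal.ofReal_mul hp0.le]
          congr 1
          field_simp
      _ ≤ _ := mul_le_mul_right stepE _
  -- final : take rpow (1/p)
  have hr0eq : r0 = C ^ (-(1/s)) * (N:ℝ) ^ (-(1/s)) := by
    rw [hr0_def, ha_def, Real.mul_rpow hC.le (Nat.cast_nonneg N)]
  calc ENNReal.ofReal ((s / (s + p)) ^ (1 / p) * C ^ (-(1 / s)) * (N : ℝ) ^ (-(1 / s)))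
      = ENNReal.ofReal ((s / (s + p) * r0 ^ p) ^ (1/p)) := by
        congr 1
        have h6 : (r0 ^ p) ^ (1/p) = r0 := by
          rw [← Real.rpow_mul hr0.le, mul_one_div, div_self hp0.ne', Real.rpow_one]
        rw [Real.mul_rpow (by positivity) (by positivity), h6, hr0eq, ← mul_assoc]
    _ = (ENNReal.ofReal (s / (s + p) * r0 ^ p)) ^ (1/p) := by
        rw [ENNReal.ofReal_rpow_of_nonneg (by positivity) (by positivity)]
    _ ≤ _ := ENNReal.rpow_le_rpow key (by positivity)


theorem wasserstein_ge_of_upper_regular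
    {X : Type*} [MetricSpace X] [MeasurableSpace X] [BorelSpace X]
    (p : ℝ) (hp : 1 ≤ p) (s : ℝ) (hs : 0 < s) (C : ℝ) (hC : 0 < C)
    (μ : Measure X) [IsProbabilityMeasure μ]
    (hreg : ∀ x : X, ∀ r : ℝ, 0 < r → μ (closedBall x r) ≤ ENNReal.ofReal (C * r ^ s))
    (N : ℕ) (hN : 0 < N) :
    ENNReal.ofReal ((s / (s + p)) ^ (1 / p) * C ^ (-(1 / s)) * (N : ℝ) ^ (-(1 / s)))
      ≤ WpDelta p μ N := by
  rw [WpDelta]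
  refine le_iInf fun ν => le_iInf fun hν => ?_
  obtain ⟨⟨S, hScard, hSnull⟩, hmass⟩ := hν
  rw [Wp]
  refine le_iInf fun π => le_iInf fun hπ => ?_
  obtain ⟨hπ1, hπ2⟩ := hπ
  have hSne : S.Nonempty := by
    rw [Finset.nonempty_iff_ne_empty]
    rintro rfl
    simp only [Finset.coe_empty, Set.compl_empty] at hSnull
    exact one_ne_zero (by rw [← measure_univ (μ := μ), ← hmass, hSnull])
  exact aux_wasserstein_main p hp s hs C hC μ hreg N hN S hScard π hπ1
    (by rw [hπ2]; exact hSnull) hSne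
end
end

section
/- (Monotony lemma) Let (X,d) be a metric space, p ∈ [1,∞), and let μ and ν be finite compactly supported Borel measures on X of equal total mass. If μ̃ is a measure with μ̃ ≤ μ (i.e. μ̃(A) ≤ μ(A) for every Borel set A), then there exists a measure ν̃ with ν̃ ≤ ν (in particular supp ν̃ ⊂ supp ν), of the same total mass as μ̃, such that W_p(μ̃, ν̃) ≤ W_p(μ, ν). -/
open MeasureTheory Metric Filter
open scoped ENNReal

noncomputable section

section Helpers
variable {α β : Type*} [MeasurableSpace α] [MeasurableSpace β]

lemma aux_map_withDensity (π : Measure α) {q : α → β} (hq : Measurable q)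
    {g : β → ℝ≥0∞} (hg : Measurable g) :
    (π.withDensity (g ∘ q)).map q = (π.map q).withDensity g := by
  ext s hs
  rw [Measure.map_apply hq hs, withDensity_apply _ (hq hs), withDensity_apply _ hs,
    setLIntegral_map hs hg hq]
  rfl

lemma aux_withDensity_le (π : Measure α) {g : α → ℝ≥0∞} (h : ∀ᵐ x ∂π, g x ≤ 1) :
    π.withDensity g ≤ π := by
  rw [Measure.le_iff]
  intro s hs
  rw [withDensity_apply _ hs]
  calc ∫⁻ x in s, g x ∂π ≤ ∫⁻ _x in s, 1 ∂π := lintegral_mono_ae (ae_restrict_of_ae h)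
    _ = π s := by simp [hs]

lemma aux_coupling_mass {μ ν : Measure α} {π : Measure (α × α)}
    (hπ : IsCoupling μ ν π) : π Set.univ = μ Set.univ ∧ π Set.univ = ν Set.univ := by
  constructor
  · rw [← hπ.1, Measure.map_apply measurable_fst MeasurableSet.univ]; rfl
  · rw [← hπ.2, Measure.map_apply measurable_snd MeasurableSet.univ]; rfl

lemma aux_withDensity_univ (ν : Measure α) {g : α → ℝ≥0∞} :
    ν.withDensity g Set.univ = ∫⁻ x, g x ∂ν := by
  rw [withDensity_apply _ MeasurableSet.univ, setLIntegral_univ]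
end Helpers

/-- Given a coupling from `μ'` to `ν.withDensity h`, produce a coupling from `μ'` to
`ν.withDensity k` whose cost exceeds the original by at most `diam^p` times the
`L¹`-distance of the densities. -/
lemma aux_perturb {X : Type*} [MetricSpace X] [MeasurableSpace X] [BorelSpace X]
    {p : ℝ} (hp : 1 ≤ p)
    (μ' ν : Measure X) [IsFiniteMeasure μ'] [IsFiniteMeasure ν]
    {Kμ Kν : Set X} (hKμ : IsCompact Kμ) (hKν : IsCompact Kν)
    (hμK : μ' Kμᶜ = 0) (hνK : ν Kνᶜ = 0)
    {h k : X → ℝ≥0∞} (hh : Measurable h) (hk : Measurable k)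
    (hhfin : ∀ x, h x ≠ ∞)
    (hmass : ∫⁻ x, h x ∂ν = ∫⁻ x, k x ∂ν)
    (hmfin : ∫⁻ x, k x ∂ν ≠ ∞)
    {π : Measure (X × X)} (hπ : IsCoupling μ' (ν.withDensity h) π) :
    ∃ τ : Measure (X × X), IsCoupling μ' (ν.withDensity k) τ ∧
      (∫⁻ z, edist z.1 z.2 ^ p ∂τ) ≤ (∫⁻ z, edist z.1 z.2 ^ p ∂π)
        + (EMetric.diam (Kμ ∪ Kν)) ^ p *
          ((∫⁻ x, (h x - k x) ∂ν) + (∫⁻ x, (k x - h x) ∂ν)) := by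
  have hp0 : (0:ℝ) ≤ p := by linarith
  set D : ℝ≥0∞ := EMetric.diam (Kμ ∪ Kν) ^ p with hD
  -- reweighting function
  set w : X → ℝ≥0∞ := fun y => min (h y) (k y) * (h y)⁻¹ with hw
  have hwm : Measurable w := (hh.min hk).mul hh.inv
  have hw1 : ∀ y, w y ≤ 1 := by
    intro y
    calc min (h y) (k y) * (h y)⁻¹ ≤ h y * (h y)⁻¹ :=
          mul_le_mul_left (min_le_left _ _) _
      _ = h y / h y := by rw [div_eq_mul_inv]
      _ ≤ 1 := ENNReal.div_self_le_one
  have hwh : ∀ y, h y * w y = min (h y) (k y) := by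
    intro y
    rcases eq_or_ne (h y) 0 with h0 | h0
    · have : min (h y) (k y) = 0 := by
        rw [h0]; exact min_eq_left (zero_le)
      simp [hw, h0, this]
    · calc h y * (min (h y) (k y) * (h y)⁻¹)
          = min (h y) (k y) * (h y * (h y)⁻¹) := by ring
        _ = min (h y) (k y) := by
            rw [ENNReal.mul_inv_cancel h0 (hhfin y), mul_one]
  -- the reduced coupling
  set π'' : Measure (X × X) := π.withDensity (w ∘ Prod.snd) with hπ''
  have hπ''le : π'' ≤ π := aux_withDensity_le π (ae_of_all _ fun z => hw1 z.2)
  have hsnd'' : π''.map Prod.snd = ν.withDensity (fun y => min (h y) (k y)) := by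
    rw [hπ'', aux_map_withDensity π measurable_snd hwm, hπ.2, ← withDensity_mul ν hh hwm]
    exact withDensity_congr_ae (ae_of_all _ fun y => hwh y)
  set e : Measure X := ν.withDensity (fun y => min (h y) (k y)) with he
  set μ'' : Measure X := π''.map Prod.fst with hμ''
  have hμ''le : μ'' ≤ μ' := by
    rw [hμ'', ← hπ.1]
    exact Measure.map_mono hπ''le measurable_fst
  haveI : IsFiniteMeasure μ'' := isFiniteMeasure_of_le μ' hμ''le
  have hekν : e ≤ ν.withDensity k :=
    withDensity_mono (ae_of_all _ fun y => min_le_right _ _)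
  haveI : IsFiniteMeasure (ν.withDensity k) := by
    constructor
    rw [aux_withDensity_univ]
    exact lt_top_iff_ne_top.mpr hmfin
  haveI : IsFiniteMeasure e := isFiniteMeasure_of_le _ hekν
  have hcmass : μ'' Set.univ = e Set.univ := by
    have h1 := aux_coupling_mass (⟨hμ''.symm, hsnd''⟩ : IsCoupling μ'' e π'')
    exact h1.1.symm.trans h1.2
  have hμ'h : μ' Set.univ = ∫⁻ x, h x ∂ν := by
    have h1 := aux_coupling_mass hπ
    rw [← h1.1, h1.2, aux_withDensity_univ]
  have heU : e Set.univ = ∫⁻ x, min (h x) (k x) ∂ν := aux_withDensity_univ ν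
  have hminfin : ∫⁻ x, min (h x) (k x) ∂ν ≠ ∞ := by
    refine ne_top_of_le_ne_top hmfin (lintegral_mono fun y => min_le_right _ _)
  -- residual measures
  set ρ₁ : Measure X := μ' - μ'' with hρ₁
  set ρ₂ : Measure X := ν.withDensity k - e with hρ₂
  have hρ₁add : ρ₁ + μ'' = μ' := Measure.sub_add_cancel_of_le hμ''le
  have hρ₂add : ρ₂ + e = ν.withDensity k := Measure.sub_add_cancel_of_le hekν
  have hρ₁U : ρ₁ Set.univ = μ' Set.univ - μ'' Set.univ :=
    Measure.sub_apply MeasurableSet.univ hμ''le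
  have hρ₂U : ρ₂ Set.univ = (ν.withDensity k) Set.univ - e Set.univ :=
    Measure.sub_apply MeasurableSet.univ hekν
  have ht12 : ρ₁ Set.univ = ρ₂ Set.univ := by
    rw [hρ₁U, hρ₂U, hcmass, heU, hμ'h, hmass, aux_withDensity_univ]
  have htfin : ρ₁ Set.univ ≠ ∞ := by
    have : ρ₁ Set.univ ≤ μ' Set.univ := by
      have := Measure.sub_le (μ := μ') (ν := μ'')
      exact this Set.univ
    exact ne_top_of_le_ne_top (measure_ne_top μ' _) this
  -- the key size bound on the residual mass
  have hsplit : ∫⁻ x, h x ∂ν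
      = (∫⁻ x, (h x - k x) ∂ν) + ∫⁻ x, min (h x) (k x) ∂ν := by
    rw [← lintegral_add_right _ ((hh.min hk))]
    refine lintegral_congr fun y => ?_
    rcases le_total (k y) (h y) with hle | hle
    · rw [min_eq_right hle, tsub_add_cancel_of_le hle]
    · rw [min_eq_left hle, tsub_eq_zero_of_le hle, zero_add]
  have htbound : ρ₁ Set.univ ≤ ∫⁻ x, (h x - k x) ∂ν := by
    rw [hρ₁U, hcmass, heU, hμ'h, hsplit, ENNReal.add_sub_cancel_right hminfin]
  -- residual coupling
  set t : ℝ≥0∞ := ρ₁ Set.univ with ht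
  set σ : Measure (X × X) := t⁻¹ • (ρ₁.prod ρ₂) with hσ
  have hσfst : σ.map Prod.fst = ρ₁ := by
    rw [hσ, Measure.map_smul, Measure.map_fst_prod, ← ht12, smul_smul]
    rcases eq_or_ne t 0 with h0 | h0
    · have hz : ρ₁ = 0 := Measure.measure_univ_eq_zero.mp (by rw [← ht]; exact h0)
      simp [hz]
    · rw [ENNReal.inv_mul_cancel h0 htfin, one_smul]
  have hσsnd : σ.map Prod.snd = ρ₂ := by
    rw [hσ, Measure.map_smul, Measure.map_snd_prod, smul_smul]
    rcases eq_or_ne t 0 with h0 | h0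
    · have hz : ρ₂ = 0 := Measure.measure_univ_eq_zero.mp (by rw [← ht12]; exact h0)
      simp [hz]
    · rw [ENNReal.inv_mul_cancel h0 htfin, one_smul]
  have hσU : σ Set.univ ≤ t := by
    have : σ Set.univ = t⁻¹ * (ρ₁ Set.univ * ρ₂ Set.univ) := by
      rw [hσ, Measure.smul_apply, smul_eq_mul, ← Set.univ_prod_univ, Measure.prod_prod]
    rw [this, ← ht12, ← ht, ← mul_assoc]
    calc t⁻¹ * t * t ≤ 1 * t := by
          exact mul_le_mul_left (ENNReal.inv_mul_le_one t) t
      _ = t := one_mul t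
  -- support bounds for the residuals
  have hρ₁K : ρ₁ Kμᶜ = 0 := by
    refine le_antisymm ?_ (zero_le)
    calc ρ₁ Kμᶜ ≤ μ' Kμᶜ := Measure.sub_le (μ := μ') (ν := μ'') Kμᶜ
      _ = 0 := hμK
  have hρ₂K : ρ₂ Kνᶜ = 0 := by
    refine le_antisymm ?_ (zero_le)
    calc ρ₂ Kνᶜ ≤ (ν.withDensity k) Kνᶜ :=
          Measure.sub_le (μ := ν.withDensity k) (ν := e) Kνᶜ
      _ = ∫⁻ x in Kνᶜ, k x ∂ν := withDensity_apply _ hKν.isClosed.measurableSet.compl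
      _ = 0 := by
          rw [Measure.restrict_eq_zero.mpr hνK, lintegral_zero_measure]
  have hσsupp : σ ((Kμ ×ˢ Kν)ᶜ) = 0 := by
    refine le_antisymm ?_ (zero_le)
    have hsub : (Kμ ×ˢ Kν)ᶜ ⊆ (Kμᶜ ×ˢ (Set.univ : Set X)) ∪ ((Set.univ : Set X) ×ˢ Kνᶜ) := by
      intro z hz
      rw [Set.mem_compl_iff, Set.mem_prod] at hz
      push_neg at hz
      by_cases h1 : z.1 ∈ Kμ
      · exact Or.inr (Set.mem_prod.mpr ⟨trivial, hz h1⟩)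
      · exact Or.inl (Set.mem_prod.mpr ⟨h1, trivial⟩)
    calc σ ((Kμ ×ˢ Kν)ᶜ) ≤ σ (Kμᶜ ×ˢ (Set.univ : Set X) ∪ (Set.univ : Set X) ×ˢ Kνᶜ) :=
          measure_mono hsub
      _ ≤ σ (Kμᶜ ×ˢ (Set.univ : Set X)) + σ ((Set.univ : Set X) ×ˢ Kνᶜ) :=
          measure_union_le _ _
      _ = 0 := by
          rw [hσ, Measure.smul_apply, Measure.smul_apply, Measure.prod_prod,
            Measure.prod_prod, hρ₁K, hρ₂K]
          simp
  refine ⟨π'' + σ, ⟨?_, ?_⟩, ?_⟩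
  · rw [Measure.map_add _ _ measurable_fst, ← hμ'', hσfst, add_comm]
    exact hρ₁add
  · rw [Measure.map_add _ _ measurable_snd, hsnd'', hσsnd, add_comm]
    exact hρ₂add
  · rw [lintegral_add_measure]
    refine add_le_add (lintegral_mono' hπ''le le_rfl) ?_
    have hae : ∀ᵐ z ∂σ, edist z.1 z.2 ^ p ≤ D := by
      have hmem : ∀ᵐ z ∂σ, z ∈ Kμ ×ˢ Kν := by
        rw [ae_iff]
        exact hσsupp
      filter_upwards [hmem] with z hz
      have h1 : edist z.1 z.2 ≤ EMetric.diam (Kμ ∪ Kν) :=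
        EMetric.edist_le_diam_of_mem (Set.mem_union_left _ hz.1) (Set.mem_union_right _ hz.2)
      exact ENNReal.rpow_le_rpow h1 hp0
    calc ∫⁻ z, edist z.1 z.2 ^ p ∂σ ≤ ∫⁻ _z, D ∂σ := lintegral_mono_ae hae
      _ = D * σ Set.univ := lintegral_const D
      _ ≤ D * ((∫⁻ x, (h x - k x) ∂ν) + ∫⁻ x, (k x - h x) ∂ν) := by
          refine mul_le_mul_right ?_ D
          exact le_trans hσU (le_trans htbound le_self_add)

/-- rpow commutes with (possibly empty) infima. -/
lemma aux_rpow_iInf {ι : Sort*} (f : ι → ℝ≥0∞) {c : ℝ} (hc : 0 < c) :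
    (⨅ i, f i) ^ c = ⨅ i, (f i) ^ c := by
  apply le_antisymm
  · exact le_iInf fun i => ENNReal.rpow_le_rpow (iInf_le f i) hc.le
  · have h1 : (⨅ i, (f i) ^ c) ^ (1/c) ≤ ⨅ i, f i := by
      refine le_iInf fun i => ?_
      calc (⨅ i, (f i) ^ c) ^ (1/c) ≤ ((f i) ^ c) ^ (1/c) :=
            ENNReal.rpow_le_rpow (iInf_le _ i) (by positivity)
        _ = f i := by
            rw [← ENNReal.rpow_mul, mul_one_div_cancel hc.ne', ENNReal.rpow_one]
    calc ⨅ i, (f i) ^ c = (((⨅ i, (f i) ^ c) ^ (1/c)) ^ c) := by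
          rw [← ENNReal.rpow_mul, one_div_mul_cancel hc.ne', ENNReal.rpow_one]
      _ ≤ (⨅ i, f i) ^ c := ENNReal.rpow_le_rpow h1 hc.le

/-- Reduce a coupling of `(μ, ν)` to a sub-coupling whose first marginal is `μ' ≤ μ`. -/
lemma aux_shrink {X : Type*} [MeasurableSpace X]
    (μ ν μ' : Measure X) [IsFiniteMeasure μ] [IsFiniteMeasure ν] (hle : μ' ≤ μ)
    {π : Measure (X × X)} (hπ : IsCoupling μ ν π) :
    ∃ (g : X → ℝ≥0∞) (π' : Measure (X × X)),
      Measurable g ∧ (∀ x, g x ≤ 1) ∧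
      IsCoupling μ' (ν.withDensity g) π' ∧
      (∀ c : X × X → ℝ≥0∞, ∫⁻ z, c z ∂π' ≤ ∫⁻ z, c z ∂π) ∧
      ∫⁻ x, g x ∂ν = μ' Set.univ := by
  haveI : IsFiniteMeasure μ' := isFiniteMeasure_of_le μ hle
  set f : X → ℝ≥0∞ := fun x => min (μ'.rnDeriv μ x) 1 with hf
  have hfm : Measurable f := (Measure.measurable_rnDeriv μ' μ).min measurable_const
  have hf1 : ∀ x, f x ≤ 1 := fun x => min_le_right _ _
  have hfd : μ.withDensity f = μ' := by
    have hac : μ' ≪ μ := Measure.absolutelyContinuous_of_le hle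
    have h1 : f =ᵐ[μ] μ'.rnDeriv μ := by
      filter_upwards [Measure.rnDeriv_le_one_of_le hle] with x hx
      exact min_eq_left hx
    rw [withDensity_congr_ae h1, Measure.withDensity_rnDeriv_eq μ' μ hac]
  set π' := π.withDensity (f ∘ Prod.fst) with hπ'
  have hπ'le : π' ≤ π := aux_withDensity_le π (ae_of_all _ fun z => hf1 z.1)
  have hfst : π'.map Prod.fst = μ' := by
    rw [hπ', aux_map_withDensity π measurable_fst hfm, hπ.1, hfd]
  set ν₁ := π'.map Prod.snd with hν₁
  have hν₁le : ν₁ ≤ ν := by rw [hν₁, ← hπ.2]; exact Measure.map_mono hπ'le measurable_snd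
  haveI : IsFiniteMeasure ν₁ := isFiniteMeasure_of_le ν hν₁le
  set g : X → ℝ≥0∞ := fun x => min (ν₁.rnDeriv ν x) 1 with hg
  have hgm : Measurable g := (Measure.measurable_rnDeriv _ _).min measurable_const
  have hgd : ν.withDensity g = ν₁ := by
    have hac : ν₁ ≪ ν := Measure.absolutelyContinuous_of_le hν₁le
    have h1 : g =ᵐ[ν] ν₁.rnDeriv ν := by
      filter_upwards [Measure.rnDeriv_le_one_of_le hν₁le] with x hx
      exact min_eq_left hx
    rw [withDensity_congr_ae h1, Measure.withDensity_rnDeriv_eq ν₁ ν hac]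
  have hcpl : IsCoupling μ' ν₁ π' := ⟨hfst, hν₁.symm⟩
  refine ⟨g, π', hgm, fun x => min_le_right _ _, ⟨hfst, by rw [hgd]⟩, ?_, ?_⟩
  · intro c; exact lintegral_mono' hπ'le le_rfl
  · have hc := aux_coupling_mass hcpl
    rw [← aux_withDensity_univ, hgd]
    exact hc.2.symm.trans hc.1

/-- Convex combinations of couplings. -/
lemma aux_mix {X : Type*} [MeasurableSpace X]
    (μ' ν : Measure X) {h k : X → ℝ≥0∞} (hh : Measurable h) (hk : Measurable k)
    {a b : ℝ≥0∞} (hab : a + b = 1)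
    {π₁ π₂ : Measure (X × X)} (h₁ : IsCoupling μ' (ν.withDensity h) π₁)
    (h₂ : IsCoupling μ' (ν.withDensity k) π₂) :
    IsCoupling μ' (ν.withDensity (fun x => a * h x + b * k x)) (a • π₁ + b • π₂) ∧
    ∀ c : X × X → ℝ≥0∞,
      ∫⁻ z, c z ∂(a • π₁ + b • π₂) = a * ∫⁻ z, c z ∂π₁ + b * ∫⁻ z, c z ∂π₂ := by
  constructor
  · constructor
    · rw [Measure.map_add _ _ measurable_fst, Measure.map_smul, Measure.map_smul, h₁.1, h₂.1,
        ← add_smul, hab, one_smul]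
    · have e1 : ν.withDensity (fun x => a * h x + b * k x)
          = ν.withDensity (fun x => a * h x) + ν.withDensity (fun x => b * k x) :=
        withDensity_add_left (hh.const_mul a) _
      have e2 : ν.withDensity (fun x => a * h x) = a • ν.withDensity h :=
        withDensity_smul a hh
      have e3 : ν.withDensity (fun x => b * k x) = b • ν.withDensity k :=
        withDensity_smul b hk
      rw [Measure.map_add _ _ measurable_snd, Measure.map_smul, Measure.map_smul, h₁.2, h₂.2,
        e1, e2, e3]
  · intro c
    rw [lintegral_add_measure, lintegral_smul_measure, lintegral_smul_measure, smul_eq_mul, smul_eq_mul]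

/-- Nested nonempty bounded closed convex subsets of a Hilbert space have
nonempty intersection. -/
lemma aux_nested_nonempty {E : Type*} [NormedAddCommGroup E] [InnerProductSpace ℝ E]
    [CompleteSpace E] (C : ℕ → Set E) (hne : ∀ n, (C n).Nonempty)
    (hclosed : ∀ n, IsClosed (C n)) (hconv : ∀ n, Convex ℝ (C n))
    (hmono : ∀ {m n : ℕ}, m ≤ n → C n ⊆ C m)
    {R : ℝ} (hbound : ∀ n, ∀ x ∈ C n, ‖x‖ ≤ R) :
    (⋂ n, C n).Nonempty := by
  have hproj : ∀ n, ∃ v ∈ C n, ‖(0 : E) - v‖ = ⨅ w : C n, ‖(0 : E) - w‖ := fun n =>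
    exists_norm_eq_iInf_of_complete_convex (hne n) ((hclosed n).isComplete) (hconv n) 0
  choose x hxC hxd using hproj
  set d : ℕ → ℝ := fun n => ⨅ w : C n, ‖(0 : E) - (w : E)‖ with hd
  have hbdd : ∀ n, BddBelow (Set.range fun w : C n => ‖(0 : E) - (w : E)‖) := by
    intro n
    exact ⟨0, by rintro r ⟨w, rfl⟩; positivity⟩
  have hdle : ∀ n, ∀ y ∈ C n, d n ≤ ‖y‖ := by
    intro n y hy
    have h := ciInf_le (hbdd n) (⟨y, hy⟩ : C n)
    rw [zero_sub, norm_neg] at h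
    exact h
  have hxnorm : ∀ n, ‖x n‖ = d n := by
    intro n
    have h := hxd n
    rw [zero_sub, norm_neg] at h
    exact h
  have hd0 : ∀ n, 0 ≤ d n := fun n => Real.iInf_nonneg fun w => norm_nonneg _
  have hR0 : (0:ℝ) ≤ R := le_trans (norm_nonneg _) (hbound 0 (x 0) (hxC 0))
  have hdmono : Monotone d := by
    intro a b hab
    haveI : Nonempty (C b) := (hne b).to_subtype
    refine le_ciInf fun w => ?_
    rw [zero_sub, norm_neg]
    exact hdle a w (hmono hab w.2)
  have hdboundR : ∀ n, d n ≤ R := fun n => (hxnorm n) ▸ hbound n (x n) (hxC n)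
  have key : ∀ {a b : ℕ}, a ≤ b → ‖x a - x b‖ ^ 2 ≤ 2 * (d b ^ 2 - d a ^ 2) := by
    intro a b hab
    have hmid : (1/2 : ℝ) • x a + (1/2 : ℝ) • x b ∈ C a :=
      (hconv a) (hxC a) (hmono hab (hxC b)) (by norm_num) (by norm_num) (by norm_num)
    have hmidn : d a ≤ ‖(1/2 : ℝ) • x a + (1/2 : ℝ) • x b‖ := hdle a _ hmid
    have hpar := parallelogram_law_with_norm ℝ (x a) (x b)
    have h2 : ‖x a + x b‖ = 2 * ‖(1/2 : ℝ) • x a + (1/2 : ℝ) • x b‖ := by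
      rw [← norm_smul_of_nonneg (by norm_num : (0:ℝ) ≤ 2)]
      congr 1
      rw [smul_add, smul_smul, smul_smul]
      norm_num
    have hub : 2 * d a ≤ ‖x a + x b‖ := by rw [h2]; linarith
    have hnn : (0:ℝ) ≤ 2 * d a := by linarith [hd0 a]
    have hsq : (2 * d a) ^ 2 ≤ ‖x a + x b‖ ^ 2 := by
      have h := mul_self_le_mul_self hnn hub
      rw [pow_two, pow_two]
      exact h
    rw [hxnorm a, hxnorm b] at hpar
    nlinarith [hpar, hsq]
  have hdcauchy : CauchySeq d := by
    have hbdd' : BddAbove (Set.range d) := ⟨R, by rintro r ⟨n, rfl⟩; exact hdboundR n⟩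
    exact (tendsto_atTop_ciSup hdmono hbdd').cauchySeq
  have hxcauchy : CauchySeq x := by
    rw [Metric.cauchySeq_iff]
    intro ε hε
    set ε' : ℝ := ε^2/(8*(R+1)) with hε'
    have hε'pos : 0 < ε' := by positivity
    obtain ⟨N, hN⟩ := (Metric.cauchySeq_iff).mp hdcauchy ε' hε'pos
    refine ⟨N, fun a ha b hb => ?_⟩
    have main : ∀ {a b : ℕ}, N ≤ a → N ≤ b → b ≤ a → dist (x a) (x b) < ε := by
      intro a b ha hb hba
      have h1 := key hba
      have h2 := hN b hb a ha
      rw [Real.dist_eq] at h2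
      have hmono' : d b ≤ d a := hdmono hba
      have h3 : d a - d b < ε' := by
        have : |d b - d a| = d a - d b := by
          rw [abs_sub_comm]; exact abs_of_nonneg (by linarith)
        linarith [this ▸ h2]
      have h4 : d a + d b ≤ 2*(R+1) := by linarith [hdboundR a, hdboundR b]
      have h5 : (0:ℝ) ≤ d a - d b := by linarith
      have hprod : d a^2 - d b^2 < ε^2/4 := by
        have e1 : d a^2 - d b^2 = (d a - d b)*(d a + d b) := by ring
        have e2 : (d a - d b)*(d a + d b) ≤ (d a - d b)*(2*(R+1)) :=
          mul_le_mul_of_nonneg_left h4 h5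
        have e3 : (d a - d b)*(2*(R+1)) < ε' * (2*(R+1)) :=
          mul_lt_mul_of_pos_right h3 (by positivity)
        have e4 : ε' * (2*(R+1)) = ε^2/4 := by
          rw [hε']; field_simp; ring
        linarith
      have h6 : ‖x b - x a‖ ^ 2 < ε^2/2 := by linarith
      have h7 : ‖x b - x a‖ < ε := by nlinarith [norm_nonneg (x b - x a)]
      rw [dist_eq_norm, ← norm_neg]
      simpa [neg_sub] using h7
    rcases le_total b a with h | h
    · exact main ha hb h
    · rw [dist_comm]; exact main hb ha h
  obtain ⟨y, hy⟩ := cauchySeq_tendsto_of_complete hxcauchy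
  refine ⟨y, Set.mem_iInter.mpr fun n => ?_⟩
  refine (hclosed n).mem_of_tendsto hy ?_
  filter_upwards [eventually_ge_atTop n] with m hm
  exact hmono hm (hxC m)


lemma aux_iInf₂_lt {ι : Sort*} {P : ι → Prop} {f : ι → ℝ≥0∞} {c : ℝ≥0∞}
    (h : (⨅ (i) (_ : P i), f i) < c) : ∃ i, P i ∧ f i < c := by
  by_contra hcon
  push_neg at hcon
  exact absurd (le_iInf₂ fun i hi => hcon i hi) h.not_ge

theorem monotony
    {X : Type*} [MetricSpace X] [MeasurableSpace X] [BorelSpace X]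
    (p : ℝ) (hp : 1 ≤ p)
    (μ ν : Measure X) [IsFiniteMeasure μ] [IsFiniteMeasure ν]
    (hμc : ∃ K : Set X, IsCompact K ∧ μ Kᶜ = 0)
    (hνc : ∃ K : Set X, IsCompact K ∧ ν Kᶜ = 0)
    (hmass : μ Set.univ = ν Set.univ)
    (μ' : Measure X) (hμ' : μ' ≤ μ) :
    ∃ ν' : Measure X, ν' ≤ ν ∧ ν' Set.univ = μ' Set.univ ∧ Wp p μ' ν' ≤ Wp p μ ν := by
  classical
  obtain ⟨Kμ, hKμ, hμKc⟩ := hμc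
  obtain ⟨Kν, hKν, hνKc⟩ := hνc
  haveI : IsFiniteMeasure μ' := isFiniteMeasure_of_le μ hμ'
  have hppos : (0:ℝ) < p := lt_of_lt_of_le one_pos hp
  have hp0 : (0:ℝ) < 1/p := by positivity
  have hWp_eq : ∀ (μ₁ ν₁ : Measure X),
      Wp p μ₁ ν₁ = (⨅ (π : Measure (X × X)) (_ : IsCoupling μ₁ ν₁ π),
        ∫⁻ z, edist z.1 z.2 ^ p ∂π) ^ (1/p) := by
    intro μ₁ ν₁
    rw [Wp, aux_rpow_iInf _ hp0]
    exact iInf_congr fun π => (aux_rpow_iInf _ hp0).symm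
  by_cases hm0 : μ' Set.univ = 0
  · -- trivial case : μ' = 0
    have hz : μ' = 0 := Measure.measure_univ_eq_zero.mp hm0
    refine ⟨0, Measure.zero_le _, by simp [hm0], ?_⟩
    have h00 : Wp p μ' 0 ≤ 0 := by
      rw [hz]
      have hcpl : IsCoupling (0 : Measure X) 0 (0 : Measure (X × X)) := by
        constructor <;> simp
      calc Wp p 0 0 ≤ (∫⁻ z, edist z.1 z.2 ^ p ∂(0 : Measure (X × X))) ^ (1/p) := by
            rw [Wp]; exact iInf₂_le _ hcpl
        _ = 0 := by rw [lintegral_zero_measure, ENNReal.zero_rpow_of_pos hp0]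
    exact le_trans h00 (zero_le)
  -- the optimal total cost between μ and ν
  set A : ℝ≥0∞ := ⨅ (π : Measure (X × X)) (_ : IsCoupling μ ν π),
    ∫⁻ z, edist z.1 z.2 ^ p ∂π with hA
  by_cases hAtop : A = ⊤
  · -- infinite cost : any admissible ν' works
    have hν0 : ν Set.univ ≠ 0 := by
      intro h0
      exact hm0 (le_antisymm (le_trans (Measure.le_iff'.mp hμ' Set.univ)
        (le_of_eq (hmass.trans h0))) (zero_le))
    refine ⟨(μ' Set.univ / ν Set.univ) • ν, ?_, ?_, ?_⟩
    · rw [Measure.le_iff]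
      intro s hs
      rw [Measure.smul_apply, smul_eq_mul]
      calc (μ' Set.univ / ν Set.univ) * ν s ≤ 1 * ν s := by
            refine mul_le_mul_left ?_ _
            refine ENNReal.div_le_of_le_mul ?_
            rw [one_mul]
            exact le_trans (Measure.le_iff'.mp hμ' Set.univ) (le_of_eq hmass)
        _ = ν s := one_mul _
    · rw [Measure.smul_apply, smul_eq_mul]
      exact ENNReal.div_mul_cancel hν0 (measure_ne_top ν _)
    · rw [hWp_eq μ ν, ← hA, hAtop, ENNReal.top_rpow_of_pos hp0]
      exact le_top
  -- main case
  have hμ'K : μ' Kμᶜ = 0 :=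
    le_antisymm (le_trans (Measure.le_iff'.mp hμ' _) hμKc.le) (zero_le)
  have hDfin : EMetric.diam (Kμ ∪ Kν) ^ p ≠ ∞ := by
    refine ENNReal.rpow_ne_top_of_nonneg (le_of_lt hppos) ?_
    exact Bornology.IsBounded.ediam_ne_top ((hKμ.union hKν).isBounded)
  set D : ℝ≥0∞ := EMetric.diam (Kμ ∪ Kν) ^ p with hD
  set m : ℝ≥0∞ := μ' Set.univ with hm
  have hmfin : m ≠ ∞ := measure_ne_top μ' _
  -- near-optimal couplings
  have hnear : ∀ n : ℕ, ∃ π : Measure (X × X), IsCoupling μ ν π ∧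
      ∫⁻ z, edist z.1 z.2 ^ p ∂π ≤ A + ((n : ℝ≥0∞) + 1)⁻¹ := by
    intro n
    by_contra hcon
    push_neg at hcon
    have h1 : A + ((n : ℝ≥0∞) + 1)⁻¹ ≤ A := by
      rw [hA]
      exact le_iInf₂ fun π hπ => (hcon π hπ).le
    have h2 : A < A + ((n : ℝ≥0∞) + 1)⁻¹ := by
      refine ENNReal.lt_add_right hAtop ?_
      simp [ENNReal.inv_ne_zero]
    exact absurd (lt_of_lt_of_le h2 h1) (lt_irrefl A)
  choose πseq hπseq hcostseq using hnear
  have hsh := fun n => aux_shrink μ ν μ' hμ' (hπseq n)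
  choose g πg hgm hg1 hgcpl hgcost hgmass using hsh
  have hFg : ∀ n : ℕ,
      (⨅ (π : Measure (X × X)) (_ : IsCoupling μ' (ν.withDensity (g n)) π),
        ∫⁻ z, edist z.1 z.2 ^ p ∂π) ≤ A + ((n : ℝ≥0∞) + 1)⁻¹ := by
    intro n
    refine le_trans (iInf₂_le (πg n) (hgcpl n)) ?_
    exact le_trans (hgcost n _) (hcostseq n)
  -- move to the Hilbert space L²(ν)
  haveI : Fact ((1 : ℝ≥0∞) ≤ 2) := ⟨one_le_two⟩
  have hmem : ∀ n : ℕ, MemLp (fun x => (g n x).toReal) 2 ν := by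
    intro n
    refine MemLp.of_bound ((hgm n).ennreal_toReal).aestronglyMeasurable 1 ?_
    refine ae_of_all _ fun x => ?_
    rw [Real.norm_eq_abs, abs_of_nonneg ENNReal.toReal_nonneg]
    calc (g n x).toReal ≤ (1 : ℝ≥0∞).toReal :=
          ENNReal.toReal_mono (by simp) (hg1 n x)
      _ = 1 := by simp
  set G : ℕ → Lp ℝ 2 ν := fun n => (hmem n).toLp _ with hG
  have hGae : ∀ n, ⇑(G n) =ᵐ[ν] fun x => (g n x).toReal := fun n => (hmem n).coeFn_toLp
  have hwdG : ∀ n, ν.withDensity (fun x => ENNReal.ofReal ((G n) x)) = ν.withDensity (g n) := by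
    intro n
    refine withDensity_congr_ae ?_
    filter_upwards [hGae n] with x hx
    rw [hx, ENNReal.ofReal_toReal]
    exact ne_top_of_le_ne_top ENNReal.one_ne_top (hg1 n x)
  -- the approximating convex sets
  set T : ℕ → Set (Lp ℝ 2 ν) := fun N =>
    {u | (∀ᵐ x ∂ν, 0 ≤ u x ∧ u x ≤ 1) ∧ (∫⁻ x, ENNReal.ofReal (u x) ∂ν = m) ∧
      (⨅ (π : Measure (X × X))
        (_ : IsCoupling μ' (ν.withDensity fun x => ENNReal.ofReal (u x)) π),
          ∫⁻ z, edist z.1 z.2 ^ p ∂π) ≤ A + ((N : ℝ≥0∞) + 1)⁻¹} with hT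
  have hGT : ∀ N n : ℕ, N ≤ n → G n ∈ T N := by
    intro N n hNn
    refine ⟨?_, ?_, ?_⟩
    · filter_upwards [hGae n] with x hx
      constructor
      · rw [hx]; exact ENNReal.toReal_nonneg
      · rw [hx]
        calc (g n x).toReal ≤ (1 : ℝ≥0∞).toReal :=
              ENNReal.toReal_mono (by simp) (hg1 n x)
          _ = 1 := by simp
    · have h1 : ∫⁻ x, ENNReal.ofReal ((G n) x) ∂ν = ∫⁻ x, g n x ∂ν := by
        rw [← aux_withDensity_univ ν (g := fun x => ENNReal.ofReal ((G n) x)), hwdG n,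
          aux_withDensity_univ]
      rw [h1, hgmass n]
    · rw [hwdG n]
      refine le_trans (hFg n) (add_le_add_right ?_ A)
      rw [ENNReal.inv_le_inv]
      exact add_le_add_left (Nat.cast_le.mpr hNn) 1
  -- convexity of T N
  have hTconv : ∀ N : ℕ, Convex ℝ (T N) := by
    intro N u hu v hv a b ha hb hab
    obtain ⟨hu1, hu2, hu3⟩ := hu
    obtain ⟨hv1, hv2, hv3⟩ := hv
    have hum : Measurable fun x => ENNReal.ofReal (u x) :=
      (Lp.stronglyMeasurable u).measurable.ennreal_ofReal
    have hvm : Measurable fun x => ENNReal.ofReal (v x) :=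
      (Lp.stronglyMeasurable v).measurable.ennreal_ofReal
    have hcoe : ⇑(a • u + b • v) =ᵐ[ν] fun x => a * u x + b * v x := by
      filter_upwards [Lp.coeFn_add (a • u) (b • v), Lp.coeFn_smul a u, Lp.coeFn_smul b v]
        with x h1 h2 h3
      rw [h1, Pi.add_apply, h2, h3, Pi.smul_apply, Pi.smul_apply, smul_eq_mul, smul_eq_mul]
    have hdens : (fun x => ENNReal.ofReal ((a • u + b • v) x)) =ᵐ[ν]
        (fun x => ENNReal.ofReal a * ENNReal.ofReal (u x)
          + ENNReal.ofReal b * ENNReal.ofReal (v x)) := by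
      filter_upwards [hcoe, hu1, hv1] with x hx hux hvx
      rw [hx, ENNReal.ofReal_add (mul_nonneg ha hux.1) (mul_nonneg hb hvx.1),
        ENNReal.ofReal_mul ha, ENNReal.ofReal_mul hb]
    have hab' : ENNReal.ofReal a + ENNReal.ofReal b = 1 := by
      rw [← ENNReal.ofReal_add ha hb, hab, ENNReal.ofReal_one]
    refine ⟨?_, ?_, ?_⟩
    · filter_upwards [hcoe, hu1, hv1] with x hx hux hvx
      constructor
      · rw [hx]; exact add_nonneg (mul_nonneg ha hux.1) (mul_nonneg hb hvx.1)
      · rw [hx]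
        calc a * u x + b * v x ≤ a * 1 + b * 1 := by
              refine add_le_add ?_ ?_
              · exact mul_le_mul_of_nonneg_left hux.2 ha
              · exact mul_le_mul_of_nonneg_left hvx.2 hb
          _ = 1 := by rw [mul_one, mul_one, hab]
    · rw [lintegral_congr_ae hdens, lintegral_add_left (hum.const_mul _),
        lintegral_const_mul _ hum, lintegral_const_mul _ hvm, hu2, hv2, ← add_mul, hab', one_mul]
    · -- convexity of the transport cost
      have hwdc : ν.withDensity (fun x => ENNReal.ofReal ((a • u + b • v) x))
          = ν.withDensity (fun x => ENNReal.ofReal a * ENNReal.ofReal (u x)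
            + ENNReal.ofReal b * ENNReal.ofReal (v x)) := withDensity_congr_ae hdens
      set B : ℝ≥0∞ := A + ((N : ℝ≥0∞) + 1)⁻¹ with hB
      have hBfin : B ≠ ∞ := by
        rw [hB]
        exact ENNReal.add_ne_top.mpr ⟨hAtop, by simp⟩
      refine ENNReal.le_of_forall_pos_le_add fun η hη _ => ?_
      have hηpos : (0 : ℝ≥0∞) < η := by exact_mod_cast hη
      obtain ⟨π₁, hπ₁c, hπ₁cost⟩ := aux_iInf₂_lt (lt_of_le_of_lt hu3
        (ENNReal.lt_add_right hBfin hηpos.ne'))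
      obtain ⟨π₂, hπ₂c, hπ₂cost⟩ := aux_iInf₂_lt (lt_of_le_of_lt hv3
        (ENNReal.lt_add_right hBfin hηpos.ne'))
      obtain ⟨hmixc, hmixcost⟩ := aux_mix μ' ν hum hvm hab' hπ₁c hπ₂c
      rw [hwdc]
      calc (⨅ (π : Measure (X × X)) (_ : IsCoupling μ'
            (ν.withDensity fun x => ENNReal.ofReal a * ENNReal.ofReal (u x)
              + ENNReal.ofReal b * ENNReal.ofReal (v x)) π),
            ∫⁻ z, edist z.1 z.2 ^ p ∂π)
          ≤ ∫⁻ z, edist z.1 z.2 ^ p ∂(ENNReal.ofReal a • π₁ + ENNReal.ofReal b • π₂) :=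
            iInf₂_le _ hmixc
        _ = ENNReal.ofReal a * ∫⁻ z, edist z.1 z.2 ^ p ∂π₁
            + ENNReal.ofReal b * ∫⁻ z, edist z.1 z.2 ^ p ∂π₂ := hmixcost _
        _ ≤ ENNReal.ofReal a * (B + η) + ENNReal.ofReal b * (B + η) := by
            refine add_le_add ?_ ?_
            · exact mul_le_mul_right hπ₁cost.le _
            · exact mul_le_mul_right hπ₂cost.le _
        _ = B + η := by rw [← add_mul, hab', one_mul]
  -- extract the limit density via nested convex sets
  have hGnorm : ∀ n : ℕ, ‖G n‖ ≤ ((ν Set.univ) ^ ((2:ℝ≥0∞).toReal⁻¹)).toReal + 1 := by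
    intro n
    have h1 : eLpNorm (fun x => (g n x).toReal) 2 ν
        ≤ (ν Set.univ) ^ ((2:ℝ≥0∞).toReal⁻¹) * ENNReal.ofReal 1 := by
      refine eLpNorm_le_of_ae_bound ?_
      refine ae_of_all _ fun x => ?_
      rw [Real.norm_eq_abs, abs_of_nonneg ENNReal.toReal_nonneg]
      calc (g n x).toReal ≤ (1 : ℝ≥0∞).toReal :=
            ENNReal.toReal_mono (by simp) (hg1 n x)
        _ = 1 := by simp
    rw [ENNReal.ofReal_one, mul_one] at h1
    have hfin : (ν Set.univ) ^ ((2:ℝ≥0∞).toReal⁻¹) ≠ ∞ :=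
      ENNReal.rpow_ne_top_of_nonneg (by positivity) (measure_ne_top ν _)
    rw [hG]
    rw [Lp.norm_toLp]
    calc (eLpNorm (fun x => (g n x).toReal) 2 ν).toReal
        ≤ ((ν Set.univ) ^ ((2:ℝ≥0∞).toReal⁻¹)).toReal := ENNReal.toReal_mono hfin h1
      _ ≤ _ := by linarith
  set C : ℕ → Set (Lp ℝ 2 ν) := fun N => closure (convexHull ℝ (G '' Set.Ici N)) with hC
  have hCT : ∀ N, convexHull ℝ (G '' Set.Ici N) ⊆ T N := by
    intro N
    refine convexHull_min ?_ (hTconv N)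
    rintro u ⟨n, hn, rfl⟩
    exact hGT N n hn
  obtain ⟨Gs, hGs⟩ := aux_nested_nonempty C
    (fun N => ⟨G N, subset_closure (subset_convexHull _ _ ⟨N, le_refl N, rfl⟩)⟩)
    (fun N => isClosed_closure)
    (fun N => (convex_convexHull ℝ _).closure)
    (fun {a b} hab => closure_mono (convexHull_mono (Set.image_mono fun x hx => le_trans hab hx)))
    (by
      intro N x hx
      have hball : C N ⊆ Metric.closedBall 0 (((ν Set.univ) ^ ((2:ℝ≥0∞).toReal⁻¹)).toReal + 1) := by
        refine closure_minimal (convexHull_min ?_ (convex_closedBall _ _)) Metric.isClosed_closedBall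
        rintro u ⟨n, _, rfl⟩
        rw [Metric.mem_closedBall, dist_zero_right]
        exact hGnorm n
      have := hball hx
      rwa [Metric.mem_closedBall, dist_zero_right] at this)
  -- the candidate density
  set dG : X → ℝ≥0∞ := fun x => ENNReal.ofReal (Gs x) with hdG
  have hdGm : Measurable dG := (Lp.stronglyMeasurable Gs).measurable.ennreal_ofReal
  -- approximation of Gs by elements of T N in L¹(ν)
  have happrox : ∀ N : ℕ, ∀ η : ℝ≥0∞, η ≠ 0 →
      ∃ u ∈ T N, ∫⁻ x, ENNReal.ofReal (|u x - Gs x|) ∂ν < η := by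
    intro N η hη
    set cE : ℝ≥0∞ := ν Set.univ ^ (1/(1:ℝ≥0∞).toReal - 1/(2:ℝ≥0∞).toReal) with hcE
    have hcEfin : cE ≠ ∞ := by
      refine ENNReal.rpow_ne_top_of_nonneg ?_ (measure_ne_top ν _)
      norm_num
    have hpos : (0 : ℝ≥0∞) < η / (cE + 1) :=
      ENNReal.div_pos hη (ENNReal.add_ne_top.mpr ⟨hcEfin, ENNReal.one_ne_top⟩)
    obtain ⟨r, hr0, hrlt⟩ := exists_between hpos
    have hrtop : r ≠ ∞ := (lt_of_lt_of_le hrlt le_top).ne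
    have hrtoRpos : 0 < r.toReal := ENNReal.toReal_pos hr0.ne' hrtop
    have hGsC : Gs ∈ C N := Set.mem_iInter.mp hGs N
    obtain ⟨u, huhull, hudist⟩ := Metric.mem_closure_iff.mp hGsC r.toReal hrtoRpos
    refine ⟨u, hCT N huhull, ?_⟩
    have e0 : ∫⁻ x, ENNReal.ofReal (|u x - Gs x|) ∂ν = eLpNorm (⇑u - ⇑Gs) 1 ν := by
      rw [eLpNorm_one_eq_lintegral_enorm]
      refine lintegral_congr fun x => ?_
      rw [Real.enorm_eq_ofReal_abs, Pi.sub_apply]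
    have e1 : eLpNorm (⇑u - ⇑Gs) 1 ν ≤ eLpNorm (⇑u - ⇑Gs) 2 ν * cE :=
      eLpNorm_le_eLpNorm_mul_rpow_measure_univ one_le_two
        ((Lp.stronglyMeasurable u).aestronglyMeasurable.sub
          (Lp.stronglyMeasurable Gs).aestronglyMeasurable)
    have hne : eLpNorm (⇑u - ⇑Gs) 2 ν ≠ ⊤ := by
      rw [← eLpNorm_congr_ae (Lp.coeFn_sub u Gs)]
      exact Lp.eLpNorm_ne_top (u - Gs)
    have e2 : eLpNorm (⇑u - ⇑Gs) 2 ν = ENNReal.ofReal (dist u Gs) := by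
      rw [Lp.dist_def, ENNReal.ofReal_toReal hne]
    have e3 : ENNReal.ofReal (dist u Gs) ≤ r := by
      rw [dist_comm] at hudist
      calc ENNReal.ofReal (dist u Gs) ≤ ENNReal.ofReal r.toReal :=
            ENNReal.ofReal_le_ofReal hudist.le
        _ = r := ENNReal.ofReal_toReal hrtop
    calc ∫⁻ x, ENNReal.ofReal (|u x - Gs x|) ∂ν ≤ ENNReal.ofReal (dist u Gs) * cE := by
          rw [e0, ← e2]; exact e1
      _ ≤ r * (cE + 1) := by
          refine mul_le_mul' e3 ?_
          exact le_self_add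
      _ < η := ENNReal.mul_lt_of_lt_div hrlt
  -- total mass of the limit density
  have hMG : ∫⁻ x, dG x ∂ν = m := by
    have hub : ∀ η : ℝ≥0∞, η ≠ 0 → ∫⁻ x, dG x ∂ν ≤ m + η := by
      intro η hη
      obtain ⟨u, hu, hδ⟩ := happrox 0 η hη
      have hum : Measurable fun x => ENNReal.ofReal (u x) :=
        (Lp.stronglyMeasurable u).measurable.ennreal_ofReal
      calc ∫⁻ x, dG x ∂ν
          ≤ ∫⁻ x, (ENNReal.ofReal (u x) + ENNReal.ofReal (|u x - Gs x|)) ∂ν := by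
            refine lintegral_mono fun x => ?_
            rw [hdG]
            calc ENNReal.ofReal (Gs x) ≤ ENNReal.ofReal (u x + |u x - Gs x|) := by
                  refine ENNReal.ofReal_le_ofReal ?_
                  have := le_abs_self (Gs x - u x)
                  rw [abs_sub_comm]
                  linarith
              _ ≤ ENNReal.ofReal (u x) + ENNReal.ofReal (|u x - Gs x|) :=
                  ENNReal.ofReal_add_le
        _ = ∫⁻ x, ENNReal.ofReal (u x) ∂ν + ∫⁻ x, ENNReal.ofReal (|u x - Gs x|) ∂ν :=
            lintegral_add_left hum _
        _ ≤ m + η := add_le_add (le_of_eq hu.2.1) hδ.le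
    have hlb : ∀ η : ℝ≥0∞, η ≠ 0 → m ≤ ∫⁻ x, dG x ∂ν + η := by
      intro η hη
      obtain ⟨u, hu, hδ⟩ := happrox 0 η hη
      calc m = ∫⁻ x, ENNReal.ofReal (u x) ∂ν := hu.2.1.symm
        _ ≤ ∫⁻ x, (dG x + ENNReal.ofReal (|u x - Gs x|)) ∂ν := by
            refine lintegral_mono fun x => ?_
            rw [hdG]
            calc ENNReal.ofReal (u x) ≤ ENNReal.ofReal (Gs x + |u x - Gs x|) := by
                  refine ENNReal.ofReal_le_ofReal ?_
                  have := le_abs_self (u x - Gs x)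
                  linarith
              _ ≤ ENNReal.ofReal (Gs x) + ENNReal.ofReal (|u x - Gs x|) :=
                  ENNReal.ofReal_add_le
        _ = ∫⁻ x, dG x ∂ν + ∫⁻ x, ENNReal.ofReal (|u x - Gs x|) ∂ν :=
            lintegral_add_left hdGm _
        _ ≤ ∫⁻ x, dG x ∂ν + η := add_le_add le_rfl hδ.le
    refine le_antisymm ?_ ?_
    · refine ENNReal.le_of_forall_pos_le_add fun η hη _ => ?_
      exact hub η (by exact_mod_cast hη.ne')
    · refine ENNReal.le_of_forall_pos_le_add fun η hη _ => ?_
      exact hlb η (by exact_mod_cast hη.ne')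
  -- the limit density is bounded by one
  have hdG1 : ∀ᵐ x ∂ν, dG x ≤ 1 := by
    have hzero : ∫⁻ x, (dG x - 1) ∂ν = 0 := by
      refine le_antisymm ?_ (zero_le)
      refine ENNReal.le_of_forall_pos_le_add fun η hη _ => ?_
      rw [zero_add]
      obtain ⟨u, hu, hδ⟩ := happrox 0 η (by exact_mod_cast hη.ne')
      have hu1 : ∀ᵐ x ∂ν, ENNReal.ofReal (u x) ≤ 1 := by
        filter_upwards [hu.1] with x hx
        exact ENNReal.ofReal_le_one.mpr hx.2
      calc ∫⁻ x, (dG x - 1) ∂ν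
          ≤ ∫⁻ x, ((ENNReal.ofReal (u x) - 1) + ENNReal.ofReal (|u x - Gs x|)) ∂ν := by
            refine lintegral_mono fun x => ?_
            rw [hdG]
            have h1 : ENNReal.ofReal (Gs x)
                ≤ ENNReal.ofReal (u x) + ENNReal.ofReal (|u x - Gs x|) := by
              calc ENNReal.ofReal (Gs x) ≤ ENNReal.ofReal (u x + |u x - Gs x|) := by
                    refine ENNReal.ofReal_le_ofReal ?_
                    have := le_abs_self (Gs x - u x)
                    rw [abs_sub_comm]
                    linarith
                _ ≤ _ := ENNReal.ofReal_add_le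
            calc ENNReal.ofReal (Gs x) - 1
                ≤ (ENNReal.ofReal (u x) + ENNReal.ofReal (|u x - Gs x|)) - 1 :=
                  tsub_le_tsub_right h1 1
              _ ≤ (ENNReal.ofReal (u x) - 1) + ENNReal.ofReal (|u x - Gs x|) := by
                  rw [add_comm (ENNReal.ofReal (u x) - 1)]
                  rw [add_comm (ENNReal.ofReal (u x))]
                  exact add_tsub_le_assoc
          _ = ∫⁻ x, (ENNReal.ofReal (u x) - 1) ∂ν + ∫⁻ x, ENNReal.ofReal (|u x - Gs x|) ∂ν :=
            lintegral_add_left (((Lp.stronglyMeasurable u).measurable.ennreal_ofReal).sub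
              measurable_const) _
          _ ≤ 0 + η := by
              refine add_le_add ?_ hδ.le
              have : ∫⁻ x, (ENNReal.ofReal (u x) - 1) ∂ν = ∫⁻ _x, 0 ∂ν := by
                refine lintegral_congr_ae ?_
                filter_upwards [hu1] with x hx
                exact tsub_eq_zero_of_le hx
              rw [this, lintegral_zero]
          _ = η := by rw [zero_add]
    have hae := (lintegral_eq_zero_iff (hdGm.sub measurable_const)).mp hzero
    filter_upwards [hae] with x hx
    exact tsub_eq_zero_iff_le.mp hx
  -- the candidate measure
  refine ⟨ν.withDensity dG, aux_withDensity_le ν hdG1, ?_, ?_⟩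
  · rw [aux_withDensity_univ, hMG]
  -- the Wasserstein estimate
  have hFG : (⨅ (π : Measure (X × X)) (_ : IsCoupling μ' (ν.withDensity dG) π),
      ∫⁻ z, edist z.1 z.2 ^ p ∂π) ≤ A := by
    have hstep : ∀ N : ℕ, (⨅ (π : Measure (X × X)) (_ : IsCoupling μ' (ν.withDensity dG) π),
        ∫⁻ z, edist z.1 z.2 ^ p ∂π) ≤ A + ((N : ℝ≥0∞) + 1)⁻¹ := by
      intro N
      set B : ℝ≥0∞ := A + ((N : ℝ≥0∞) + 1)⁻¹ with hB
      have hBfin : B ≠ ∞ := ENNReal.add_ne_top.mpr ⟨hAtop, by simp⟩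
      refine ENNReal.le_of_forall_pos_le_add fun η hη _ => ?_
      have hηpos : (0:ℝ≥0∞) < (η : ℝ≥0∞) := by exact_mod_cast hη
      set η₀ : ℝ≥0∞ := (η : ℝ≥0∞) / (1 + 2 * D) with hη₀
      have hdenfin : (1 + 2 * D) ≠ ∞ :=
        ENNReal.add_ne_top.mpr ⟨ENNReal.one_ne_top, ENNReal.mul_ne_top (by simp) hDfin⟩
      have hdenpos : (1 + 2 * D) ≠ 0 := by simp
      have hη₀pos : η₀ ≠ 0 := by
        rw [hη₀]
        simp [ENNReal.div_eq_zero_iff, hηpos.ne', hdenfin]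
      obtain ⟨u, hu, hδ⟩ := happrox N η₀ hη₀pos
      have hum : Measurable fun x => ENNReal.ofReal (u x) :=
        (Lp.stronglyMeasurable u).measurable.ennreal_ofReal
      -- near-optimal coupling towards the density of u
      obtain ⟨π₁, hπ₁c, hπ₁cost⟩ := aux_iInf₂_lt (lt_of_le_of_lt hu.2.2
        (ENNReal.lt_add_right hBfin hη₀pos))
      -- masses agree
      have hmassuv : ∫⁻ x, ENNReal.ofReal (u x) ∂ν = ∫⁻ x, dG x ∂ν := by
        rw [hu.2.1, hMG]
      have hmfin' : ∫⁻ x, dG x ∂ν ≠ ∞ := by rw [hMG]; exact hmfin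
      obtain ⟨τ, hτc, hτcost⟩ := aux_perturb hp μ' ν hKμ hKν hμ'K hνKc hum hdGm
        (fun x => ENNReal.ofReal_ne_top) hmassuv hmfin' hπ₁c
      -- the L¹ error bounds
      have hT1 : ∫⁻ x, (ENNReal.ofReal (u x) - dG x) ∂ν
          ≤ ∫⁻ x, ENNReal.ofReal (|u x - Gs x|) ∂ν := by
        refine lintegral_mono fun x => ?_
        rw [hdG]
        refine tsub_le_iff_right.mpr ?_
        calc ENNReal.ofReal (u x) ≤ ENNReal.ofReal (Gs x + |u x - Gs x|) := by
              refine ENNReal.ofReal_le_ofReal ?_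
              have := le_abs_self (u x - Gs x)
              linarith
          _ ≤ ENNReal.ofReal (Gs x) + ENNReal.ofReal (|u x - Gs x|) := ENNReal.ofReal_add_le
          _ = ENNReal.ofReal (|u x - Gs x|) + ENNReal.ofReal (Gs x) := add_comm _ _
      have hT2 : ∫⁻ x, (dG x - ENNReal.ofReal (u x)) ∂ν
          ≤ ∫⁻ x, ENNReal.ofReal (|u x - Gs x|) ∂ν := by
        refine lintegral_mono fun x => ?_
        rw [hdG]
        refine tsub_le_iff_right.mpr ?_
        calc ENNReal.ofReal (Gs x) ≤ ENNReal.ofReal (u x + |u x - Gs x|) := by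
              refine ENNReal.ofReal_le_ofReal ?_
              have := le_abs_self (Gs x - u x)
              rw [abs_sub_comm]
              linarith
          _ ≤ ENNReal.ofReal (u x) + ENNReal.ofReal (|u x - Gs x|) := ENNReal.ofReal_add_le
          _ = ENNReal.ofReal (|u x - Gs x|) + ENNReal.ofReal (u x) := add_comm _ _
      calc (⨅ (π : Measure (X × X)) (_ : IsCoupling μ' (ν.withDensity dG) π),
            ∫⁻ z, edist z.1 z.2 ^ p ∂π)
          ≤ ∫⁻ z, edist z.1 z.2 ^ p ∂τ := iInf₂_le _ hτc
        _ ≤ (∫⁻ z, edist z.1 z.2 ^ p ∂π₁) + D *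
              ((∫⁻ x, (ENNReal.ofReal (u x) - dG x) ∂ν)
                + ∫⁻ x, (dG x - ENNReal.ofReal (u x)) ∂ν) := hτcost
        _ ≤ (B + η₀) + D * (η₀ + η₀) := by
            refine add_le_add hπ₁cost.le (mul_le_mul_right ?_ D)
            exact add_le_add (le_trans hT1 hδ.le) (le_trans hT2 hδ.le)
        _ = B + η₀ * (1 + 2 * D) := by ring
        _ = B + η := by rw [hη₀, ENNReal.div_mul_cancel hdenpos hdenfin]
    refine ENNReal.le_of_forall_pos_le_add fun ε hε _ => ?_
    have hεne : ((ε : ℝ≥0∞)) ≠ 0 := by exact_mod_cast hε.ne'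
    obtain ⟨n, hn⟩ := ENNReal.exists_inv_nat_lt hεne
    refine le_trans (hstep n) (add_le_add_right ?_ A)
    calc ((n : ℝ≥0∞) + 1)⁻¹ ≤ ((n : ℝ≥0∞))⁻¹ := by
          rw [ENNReal.inv_le_inv]
          exact le_self_add
      _ ≤ ε := hn.le
  rw [hWp_eq μ' (ν.withDensity dG), hWp_eq μ ν, ← hA]
  exact ENNReal.rpow_le_rpow hFG hp0.le
end
end

section
/- (L¹ stability) Let p ∈ [1,∞), d ≥ 1, and let μ and μ̃ be finite Borel measures of equal total mass, both supported in a cube D ⊂ ℝ^d of side length L. Then for every positive integer N and every positive integer K with K^d ≤ N, W_p(μ̃, Δ_N)^p ≤ W_p(μ, Δ_{N−K^d})^p + |μ − μ̃|_{TV} · (L√d / (2K))^p, where |μ − μ̃|_{TV} denotes the total variation distance between μ and μ̃. -/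
open MeasureTheory Metric Filter
open scoped ENNReal

noncomputable section

/-! ### Auxiliary lemmas -/

lemma L1Stab.pow_iInf {ι : Sort*} (f : ι → ℝ≥0∞) {p : ℝ} (hp : 0 < p) :
    (⨅ i, f i) ^ p = ⨅ i, f i ^ p := by
  have h := map_iInf (ENNReal.orderIsoRpow p hp) f
  simp only [ENNReal.orderIsoRpow_apply] at h
  exact h

lemma L1Stab.Wp_pow {X : Type*} [PseudoMetricSpace X] [MeasurableSpace X]
    {p : ℝ} (hp : 0 < p) (μ ν : Measure X) :
    Wp p μ ν ^ p =
      ⨅ (π : Measure (X × X)) (_ : IsCoupling μ ν π), ∫⁻ z, edist z.1 z.2 ^ p ∂π := by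
  rw [Wp, L1Stab.pow_iInf _ hp]
  refine iInf_congr fun π => ?_
  rw [L1Stab.pow_iInf _ hp]
  refine iInf_congr fun _ => ?_
  rw [← ENNReal.rpow_mul, one_div_mul_cancel hp.ne', ENNReal.rpow_one]

lemma L1Stab.grid_coord (K : ℕ) (hK : 0 < K) (L t : ℝ) (hL : 0 < L)
    (ht0 : 0 ≤ t) (htL : t ≤ L) :
    |t - ((min (K-1) ⌊t/(L/K)⌋₊ : ℕ) + 1/2) * (L/K)| ≤ L/K/2 := by
  have hK' : (0:ℝ) < K := by exact_mod_cast hK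
  set r := L/K with hr_def
  have hr : 0 < r := div_pos hL hK'
  set n := min (K-1) ⌊t/r⌋₊ with hn_def
  have h1 : (n:ℝ) * r ≤ t := by
    rcases le_or_gt ⌊t/r⌋₊ (K-1) with h | h
    · have hn : n = ⌊t/r⌋₊ := min_eq_right h
      have hfl : (⌊t/r⌋₊ : ℝ) ≤ t/r := Nat.floor_le (div_nonneg ht0 hr.le)
      rw [hn]
      calc (⌊t/r⌋₊:ℝ) * r ≤ (t/r) * r := mul_le_mul_of_nonneg_right hfl hr.le
        _ = t := div_mul_cancel₀ t hr.ne'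
    · have hn : n = K - 1 := min_eq_left h.le
      have hKn : K ≤ ⌊t/r⌋₊ := by omega
      have hKfl : (K:ℝ) ≤ ⌊t/r⌋₊ := by exact_mod_cast hKn
      have hfl : (⌊t/r⌋₊ : ℝ) ≤ t/r := Nat.floor_le (div_nonneg ht0 hr.le)
      have hKt : (K:ℝ) * r ≤ t := by
        calc (K:ℝ) * r ≤ (t/r) * r := mul_le_mul_of_nonneg_right (hKfl.trans hfl) hr.le
          _ = t := div_mul_cancel₀ t hr.ne'
      have hcast : (n:ℝ) = (K:ℝ) - 1 := by
        rw [hn]; push_cast [Nat.cast_sub hK]; ring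
      nlinarith
  have h2 : t ≤ ((n:ℝ)+1) * r := by
    rcases le_or_gt ⌊t/r⌋₊ (K-1) with h | h
    · have hn : n = ⌊t/r⌋₊ := min_eq_right h
      have hfl : t/r < ⌊t/r⌋₊ + 1 := Nat.lt_floor_add_one (t/r)
      have : t < ((⌊t/r⌋₊:ℝ) + 1) * r := by
        calc t = (t/r) * r := (div_mul_cancel₀ t hr.ne').symm
          _ < ((⌊t/r⌋₊:ℝ) + 1) * r := by
            exact mul_lt_mul_of_pos_right hfl hr
      rw [hn]; exact this.le
    · have hn : n = K - 1 := min_eq_left h.le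
      have hcast : (n:ℝ) = (K:ℝ) - 1 := by
        rw [hn]; push_cast [Nat.cast_sub hK]; ring
      have : ((n:ℝ)+1) * r = L := by
        rw [hcast]
        have : ((K:ℝ)-1+1) * (L / K) = L := by field_simp; ring
        simpa using this
      linarith
  rw [abs_le]
  constructor <;> nlinarith

/-- The grid snapping map used to quantize the extra mass. -/
def L1Stab.Tmap (d K : ℕ) (c : Fin d → ℝ) (L : ℝ) :
    EuclideanSpace ℝ (Fin d) → EuclideanSpace ℝ (Fin d) := fun x =>
  (MeasurableEquiv.toLp 2 (Fin d → ℝ))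
    (fun i => c i + ((min (K-1) ⌊(x i - c i)/(L/K)⌋₊ : ℕ) + 1/2) * (L/K))

lemma L1Stab.Tmap_apply (d K : ℕ) (c : Fin d → ℝ) (L : ℝ)
    (x : EuclideanSpace ℝ (Fin d)) (i : Fin d) :
    L1Stab.Tmap d K c L x i
      = c i + ((min (K-1) ⌊(x i - c i)/(L/K)⌋₊ : ℕ) + 1/2) * (L/K) := rfl

lemma L1Stab.Tmap_measurable (d K : ℕ) (c : Fin d → ℝ) (L : ℝ) :
    Measurable (L1Stab.Tmap d K c L) := by
  refine (MeasurableEquiv.toLp 2 (Fin d → ℝ)).measurable.comp ?_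
  refine measurable_pi_lambda _ fun i => ?_
  have hxi : Measurable fun x : EuclideanSpace ℝ (Fin d) => x i :=
    (measurable_pi_apply i).comp (MeasurableEquiv.toLp 2 (Fin d → ℝ)).symm.measurable
  have hfloor : Measurable fun x : EuclideanSpace ℝ (Fin d) => ⌊(x i - c i)/(L/K)⌋₊ :=
    Nat.measurable_floor.comp (((hxi.sub measurable_const).div_const _))
  exact (measurable_from_top
    (f := fun n : ℕ => c i + ((min (K-1) n : ℕ) + 1/2) * (L/K))).comp hfloor

theorem l1_stability
    (d : ℕ) (hd : 1 ≤ d) (p : ℝ) (hp : 1 ≤ p)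
    (L : ℝ) (hL : 0 < L) (c : Fin d → ℝ)
    (D : Set (EuclideanSpace ℝ (Fin d)))
    (hD : D = {x : EuclideanSpace ℝ (Fin d) | ∀ i, x i ∈ Set.Icc (c i) (c i + L)})
    (μ μ' : Measure (EuclideanSpace ℝ (Fin d))) [IsFiniteMeasure μ] [IsFiniteMeasure μ']
    (hμD : μ Dᶜ = 0) (hμ'D : μ' Dᶜ = 0)
    (hmass : μ Set.univ = μ' Set.univ)
    (N K : ℕ) (hN : 0 < N) (hK : 0 < K) (hKN : K ^ d ≤ N) :
    WpDelta p μ' N ^ p ≤ WpDelta p μ (N - K ^ d) ^ p +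
      (μ.toSignedMeasure - μ'.toSignedMeasure).totalVariation Set.univ *
        ENNReal.ofReal ((L * Real.sqrt d / (2 * K)) ^ p) := by
  classical
  let E := EuclideanSpace ℝ (Fin d)
  have hp0 : (0:ℝ) < p := lt_of_lt_of_le one_pos hp
  set C := (μ.toSignedMeasure - μ'.toSignedMeasure).totalVariation Set.univ *
      ENNReal.ofReal ((L * Real.sqrt d / (2 * K)) ^ p) with hC_def
  set M := N - K ^ d with hM_def
  -- measurability of coordinates and of D
  have hxi : ∀ i : Fin d, Measurable fun x : E => x i := fun i =>
    (measurable_pi_apply i).comp (MeasurableEquiv.toLp 2 (Fin d → ℝ)).symm.measurable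
  have hDm : MeasurableSet D := by
    rw [hD]
    have : {x : E | ∀ i, x i ∈ Set.Icc (c i) (c i + L)}
        = ⋂ i, (fun x : E => x i) ⁻¹' Set.Icc (c i) (c i + L) := by
      ext x; simp
    rw [this]
    exact MeasurableSet.iInter fun i => (hxi i) measurableSet_Icc
  -- the grid map and its properties
  set T := L1Stab.Tmap d K c L with hT_def
  have hTmeas : Measurable T := L1Stab.Tmap_measurable d K c L
  have hK' : (0:ℝ) < K := by exact_mod_cast hK
  have hd' : (0:ℝ) < d := by exact_mod_cast hd
  set B := ENNReal.ofReal ((L * Real.sqrt d / (2 * K)) ^ p) with hB_def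
  have hrpos : (0:ℝ) < L * Real.sqrt d / (2 * K) := by positivity
  have hTdist : ∀ x ∈ D, dist x (T x) ≤ L * Real.sqrt d / (2 * K) := by
    intro x hx
    rw [EuclideanSpace.dist_eq]
    have hb : ∀ i : Fin d, dist (x i) (T x i) ^ 2 ≤ (L/K/2)^2 := by
      intro i
      have hxIcc : x i ∈ Set.Icc (c i) (c i + L) := by
        rw [hD] at hx; exact hx i
      have hg := L1Stab.grid_coord K hK L (x i - c i) hL
        (by linarith [hxIcc.1]) (by linarith [hxIcc.2])
      have habs : |x i - T x i| ≤ L/K/2 := by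
        rw [hT_def, L1Stab.Tmap_apply]
        calc |x i - (c i + ((min (K-1) ⌊(x i - c i)/(L/K)⌋₊ : ℕ) + 1/2) * (L/K))|
            = |(x i - c i) - ((min (K-1) ⌊(x i - c i)/(L/K)⌋₊ : ℕ) + 1/2) * (L/K)| := by
              ring_nf
          _ ≤ L/K/2 := hg
      rw [Real.dist_eq]
      exact pow_le_pow_left₀ (abs_nonneg _) habs 2
    calc Real.sqrt (∑ i, dist (x i) (T x i) ^ 2)
        ≤ Real.sqrt (∑ _i : Fin d, (L/K/2)^2) :=
          Real.sqrt_le_sqrt (Finset.sum_le_sum fun i _ => hb i)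
      _ = Real.sqrt ((d:ℝ) * (L/K/2)^2) := by
          rw [Finset.sum_const, Finset.card_univ, Fintype.card_fin, nsmul_eq_mul]
      _ = Real.sqrt d * (L/K/2) := by
          rw [Real.sqrt_mul (Nat.cast_nonneg d), Real.sqrt_sq (by positivity)]
      _ = L * Real.sqrt d / (2 * K) := by field_simp
  have hTbound : ∀ x ∈ D, edist x (T x) ^ p ≤ B := by
    intro x hx
    have h1 : edist x (T x) ≤ ENNReal.ofReal (L * Real.sqrt d / (2 * K)) := by
      rw [edist_dist]
      exact ENNReal.ofReal_le_ofReal (hTdist x hx)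
    calc edist x (T x) ^ p ≤ ENNReal.ofReal (L * Real.sqrt d / (2 * K)) ^ p :=
          ENNReal.rpow_le_rpow h1 hp0.le
      _ = B := by rw [hB_def, ENNReal.ofReal_rpow_of_pos hrpos]
  -- the finite set of grid centers
  set G : Finset E := Finset.image (fun k : Fin d → Fin K =>
      (MeasurableEquiv.toLp 2 (Fin d → ℝ))
        (fun i => c i + ((k i : ℕ) + 1/2) * (L/K))) Finset.univ with hG_def
  have hGcard : G.card ≤ K ^ d := by
    calc G.card ≤ (Finset.univ : Finset (Fin d → Fin K)).card := Finset.card_image_le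
      _ = K ^ d := by simp [Finset.card_univ]
  have hTG : ∀ x : E, T x ∈ (G : Set E) := by
    intro x
    rw [hG_def]
    simp only [Finset.coe_image, Set.mem_image, Finset.mem_coe, Finset.mem_univ]
    refine ⟨fun i => ⟨min (K-1) ⌊(x i - c i)/(L/K)⌋₊, by omega⟩, ⟨trivial, rfl⟩⟩
  -- Hahn decomposition of the signed measure
  set s := μ.toSignedMeasure - μ'.toSignedMeasure with hs_def
  obtain ⟨i, hi₁, hi₂, hi₃, hpos, hneg⟩ := s.toJordanDecomposition_spec
  have hsval : ∀ A : Set E, MeasurableSet A → s A = (μ A).toReal - (μ' A).toReal := by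
    intro A hA
    rw [hs_def, VectorMeasure.sub_apply, Measure.toSignedMeasure_apply_measurable hA,
      Measure.toSignedMeasure_apply_measurable hA]
    rfl
  have hμ'i : ∀ A : Set E, MeasurableSet A → A ⊆ i → μ' A ≤ μ A := by
    intro A hA hsub
    have h0 := (VectorMeasure.restrict_le_restrict_iff _ _ hi₁).1 hi₂ hA hsub
    rw [VectorMeasure.zero_apply, hsval A hA] at h0
    have := sub_nonneg.1 h0
    exact (ENNReal.toReal_le_toReal (measure_ne_top _ _) (measure_ne_top _ _)).1 this
  have hμic : ∀ A : Set E, MeasurableSet A → A ⊆ iᶜ → μ A ≤ μ' A := by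
    intro A hA hsub
    have h0 := (VectorMeasure.restrict_le_restrict_iff _ _ hi₁.compl).1 hi₃ hA hsub
    rw [VectorMeasure.zero_apply, hsval A hA] at h0
    have := sub_nonpos.1 h0
    exact (ENNReal.toReal_le_toReal (measure_ne_top _ _) (measure_ne_top _ _)).1 this
  -- the decomposition μ' = σ + τ with σ ≤ μ
  set σ : Measure E := μ'.restrict i + μ.restrict iᶜ with hσ_def
  set τ : Measure E := μ'.restrict iᶜ - μ.restrict iᶜ with hτ_def
  have hle : μ.restrict iᶜ ≤ μ'.restrict iᶜ := by
    refine Measure.le_iff.2 fun A hA => ?_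
    rw [Measure.restrict_apply hA, Measure.restrict_apply hA]
    exact hμic _ (hA.inter hi₁.compl) Set.inter_subset_right
  have hμ'decomp : σ + τ = μ' := by
    rw [hσ_def, hτ_def, add_assoc, add_comm (μ.restrict iᶜ),
      Measure.sub_add_cancel_of_le hle, Measure.restrict_add_restrict_compl hi₁]
  have hσμ : σ ≤ μ := by
    refine Measure.le_iff.2 fun A hA => ?_
    rw [hσ_def, Measure.add_apply, Measure.restrict_apply hA, Measure.restrict_apply hA]
    calc μ' (A ∩ i) + μ (A ∩ iᶜ) ≤ μ (A ∩ i) + μ (A ∩ iᶜ) :=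
          add_le_add_left (hμ'i _ (hA.inter hi₁) Set.inter_subset_right) _
      _ = μ A := by
          rw [← measure_inter_add_diff A hi₁, Set.diff_eq]
  have hτle : τ ≤ μ'.restrict iᶜ := Measure.sub_le
  have hτD : τ Dᶜ = 0 := by
    have h1 : τ Dᶜ ≤ μ' Dᶜ :=
      le_trans (Measure.le_iff'.1 hτle Dᶜ) (Measure.le_iff'.1 Measure.restrict_le_self Dᶜ)
    rw [hμ'D] at h1
    exact le_antisymm h1 zero_le
  have hτae : ∀ᵐ x ∂τ, x ∈ D := by
    rw [ae_iff]
    have h : {x : E | ¬ x ∈ D} = Dᶜ := rfl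
    rw [h]; exact hτD
  have hmuic : μ iᶜ ≤ μ' iᶜ := hμic iᶜ hi₁.compl Set.Subset.rfl
  have hτuniv_le : τ Set.univ ≤ s.totalVariation Set.univ := by
    have hτu : τ Set.univ = μ' iᶜ - μ iᶜ := by
      rw [hτ_def, Measure.sub_apply MeasurableSet.univ hle,
        Measure.restrict_apply_univ, Measure.restrict_apply_univ]
    have hnegu : s.toJordanDecomposition.negPart Set.univ = μ' iᶜ - μ iᶜ := by
      rw [hneg, SignedMeasure.toMeasureOfLEZero_apply s hi₃ hi₁.compl MeasurableSet.univ,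
        ← ENNReal.ofReal_coe_nnreal]
      simp only [NNReal.coe_mk]
      rw [Set.inter_univ, hsval _ hi₁.compl, neg_sub,
        ← ENNReal.toReal_sub_of_le hmuic (measure_ne_top μ' _),
        ENNReal.ofReal_toReal (tsub_le_self.trans_lt (measure_lt_top μ' iᶜ)).ne]
    rw [hτu, ← hnegu, SignedMeasure.totalVariation, Measure.add_apply]
    exact le_add_self
  -- the key estimate, for a fixed competitor of μ and a fixed coupling
  have key : ∀ ν : Measure E, FinSupported M ν → ∀ π : Measure (E × E), IsCoupling μ ν π →
      WpDelta p μ' N ^ p ≤ (∫⁻ z, edist z.1 z.2 ^ p ∂π) + C := by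
    intro ν hνfin π hπ
    obtain ⟨S, hScard, hS0⟩ := hνfin
    set g : E → ℝ≥0∞ := fun x => min (σ.rnDeriv μ x) 1 with hg_def
    have hg_meas : Measurable g := (Measure.measurable_rnDeriv σ μ).min measurable_const
    have hg_le_one : ∀ x, g x ≤ 1 := fun x => min_le_right _ _
    have hgd : μ.withDensity g = σ := by
      have hac : σ ≪ μ := Measure.absolutelyContinuous_of_le hσμ
      have h1 : σ.rnDeriv μ ≤ᵐ[μ] 1 := Measure.rnDeriv_le_one_of_le hσμ
      have h2 : g =ᵐ[μ] σ.rnDeriv μ := h1.mono fun x hx => min_eq_left hx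
      haveI : IsFiniteMeasure σ := by rw [hσ_def]; infer_instance
      haveI : σ.HaveLebesgueDecomposition μ := Measure.haveLebesgueDecomposition_of_sigmaFinite σ μ
      rw [withDensity_congr_ae h2, Measure.withDensity_rnDeriv_eq σ μ hac]
    set π₁ : Measure (E × E) := π.withDensity (fun z => g z.1) with hπ₁_def
    have hgm1 : Measurable fun z : E × E => g z.1 := hg_meas.comp measurable_fst
    have hπ₁_le : π₁ ≤ π := by
      refine Measure.le_iff.2 fun A hA => ?_
      rw [hπ₁_def, withDensity_apply _ hA]
      calc ∫⁻ z in A, g z.1 ∂π ≤ ∫⁻ _z in A, 1 ∂π := lintegral_mono fun z => hg_le_one _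
        _ = π A := by simp
    have hπ₁fst : π₁.map Prod.fst = σ := by
      ext A hA
      rw [Measure.map_apply measurable_fst hA, hπ₁_def,
        withDensity_apply _ (measurable_fst hA), ← hgd, withDensity_apply _ hA, ← hπ.1,
        setLIntegral_map hA hg_meas measurable_fst]
    set ν₁ := π₁.map Prod.snd with hν₁_def
    set π₂ : Measure (E × E) := τ.map (fun x => (x, T x)) with hπ₂_def
    have hxT : Measurable fun x : E => (x, T x) := measurable_id.prodMk hTmeas
    have hπ₂fst : π₂.map Prod.fst = τ := by
      rw [hπ₂_def, Measure.map_map measurable_fst hxT]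
      exact Measure.map_id
    set ν₂ := π₂.map Prod.snd with hν₂_def
    have hν₂T : ν₂ = τ.map T := by
      rw [hν₂_def, hπ₂_def, Measure.map_map measurable_snd hxT]
      rfl
    set ν' := ν₁ + ν₂ with hν'_def
    have hcoup : IsCoupling μ' ν' (π₁ + π₂) := by
      constructor
      · rw [Measure.map_add _ _ measurable_fst, hπ₁fst, hπ₂fst, hμ'decomp]
      · rw [Measure.map_add _ _ measurable_snd]
    have hfin : FinSupported N ν' := by
      refine ⟨S ∪ G, ?_, ?_⟩
      · calc (S ∪ G).card ≤ S.card + G.card := Finset.card_union_le _ _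
          _ ≤ M + K ^ d := add_le_add hScard hGcard
          _ = N := by rw [hM_def]; omega
      · have hsub1 : (↑(S ∪ G) : Set E)ᶜ ⊆ (↑S : Set E)ᶜ := by
          intro x hx hxS; exact hx (by simp [hxS])
        have hsub2 : (↑(S ∪ G) : Set E)ᶜ ⊆ (↑G : Set E)ᶜ := by
          intro x hx hxG; exact hx (by simp [hxG])
        have hSm : MeasurableSet ((↑S : Set E)ᶜ) := (S.finite_toSet.measurableSet).compl
        have h1' : ν₁ (↑S : Set E)ᶜ = 0 := by
          have hle1 : ν₁ (↑S : Set E)ᶜ ≤ ν (↑S : Set E)ᶜ := by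
            rw [hν₁_def, Measure.map_apply measurable_snd hSm, ← hπ.2,
              Measure.map_apply measurable_snd hSm]
            exact Measure.le_iff'.1 hπ₁_le _
          rw [hS0] at hle1
          exact le_antisymm hle1 zero_le
        have h1 : ν₁ (↑(S ∪ G) : Set E)ᶜ = 0 :=
          le_antisymm ((measure_mono hsub1).trans h1'.le) zero_le
        have hGm : MeasurableSet ((↑G : Set E)ᶜ) := (G.finite_toSet.measurableSet).compl
        have h2' : ν₂ (↑G : Set E)ᶜ = 0 := by
          rw [hν₂T, Measure.map_apply hTmeas hGm]
          have hpre : T ⁻¹' (↑G : Set E)ᶜ = ∅ := by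
            ext x; simp [hTG x]
          rw [hpre, measure_empty]
        have h2 : ν₂ (↑(S ∪ G) : Set E)ᶜ = 0 :=
          le_antisymm ((measure_mono hsub2).trans h2'.le) zero_le
        rw [hν'_def, Measure.add_apply, h1, h2, add_zero]
    have hmass' : ν' Set.univ = μ' Set.univ := by
      have h1 : ν₁ Set.univ = σ Set.univ := by
        rw [hν₁_def, Measure.map_apply measurable_snd MeasurableSet.univ, Set.preimage_univ,
          ← Set.preimage_univ (f := @Prod.fst E E),
          ← Measure.map_apply measurable_fst MeasurableSet.univ, hπ₁fst]
      have h2 : ν₂ Set.univ = τ Set.univ := by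
        rw [hν₂_def, Measure.map_apply measurable_snd MeasurableSet.univ, Set.preimage_univ,
          ← Set.preimage_univ (f := @Prod.fst E E),
          ← Measure.map_apply measurable_fst MeasurableSet.univ, hπ₂fst]
      rw [hν'_def, Measure.add_apply, h1, h2, ← Measure.add_apply, hμ'decomp]
    have hcost2 : (∫⁻ z, edist z.1 z.2 ^ p ∂π₂) ≤ τ Set.univ * B := by
      rw [hπ₂_def, lintegral_map (measurable_edist.pow_const p) hxT]
      calc ∫⁻ x, edist x (T x) ^ p ∂τ ≤ ∫⁻ _x, B ∂τ :=
            lintegral_mono_ae (hτae.mono fun x hx => hTbound x hx)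
        _ = τ Set.univ * B := by rw [lintegral_const, mul_comm]
    calc WpDelta p μ' N ^ p ≤ Wp p μ' ν' ^ p :=
          ENNReal.rpow_le_rpow (iInf₂_le ν' ⟨hfin, hmass'⟩) hp0.le
      _ ≤ (∫⁻ z, edist z.1 z.2 ^ p ∂(π₁ + π₂)) := by
          rw [L1Stab.Wp_pow hp0]; exact iInf₂_le _ hcoup
      _ = (∫⁻ z, edist z.1 z.2 ^ p ∂π₁) + (∫⁻ z, edist z.1 z.2 ^ p ∂π₂) :=
          lintegral_add_measure _ _ _
      _ ≤ (∫⁻ z, edist z.1 z.2 ^ p ∂π) + τ Set.univ * B :=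
          add_le_add (lintegral_mono' hπ₁_le le_rfl) hcost2
      _ ≤ (∫⁻ z, edist z.1 z.2 ^ p ∂π) + C := by
          rw [hC_def]
          exact add_le_add_right (mul_le_mul_left hτuniv_le B) _
  have expand : WpDelta p μ M ^ p
      = ⨅ (ν : Measure E) (_ : FinSupported M ν ∧ ν Set.univ = μ Set.univ)
          (π : Measure (E × E)) (_ : IsCoupling μ ν π), ∫⁻ z, edist z.1 z.2 ^ p ∂π := by
    rw [WpDelta, L1Stab.pow_iInf _ hp0]
    exact iInf_congr fun ν => by
      rw [L1Stab.pow_iInf _ hp0]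
      exact iInf_congr fun _ => L1Stab.Wp_pow hp0 μ ν
  rw [expand]
  simp only [ENNReal.iInf_add]
  exact le_iInf fun ν => le_iInf fun hν => le_iInf fun π => le_iInf fun hπ =>
    key ν hν.1 π hπ
end
end

section
/- Let (X,d) be a metric space, p ∈ [1,∞), and let μ = a₁μ¹ + a₂μ² where a₁, a₂ > 0 and μ¹, μ² are compactly supported Borel probability measures on X. Assume there exist constants such that W_p(μ², Δ_N) ≤ c · W_p(μ¹, Δ_N) for all large N, and W_p(μ¹, Δ_N) ≤ c' · W_p(μ¹, Δ_{2N}) for all large N. Then there exist constants 0 < a ≤ b with a · W_p(μ¹, Δ_N) ≤ W_p(μ, Δ_N) ≤ b · W_p(μ¹, Δ_N) for all large N. -/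
open MeasureTheory Metric Filter
open scoped ENNReal

noncomputable section

section Aux

set_option linter.unusedSectionVars false
set_option linter.unusedVariables false

variable {X : Type*} [MetricSpace X] [MeasurableSpace X] [BorelSpace X]

lemma wpDelta_le_wp {p : ℝ} {μ ν : Measure X} {N : ℕ}
    (h1 : FinSupported N ν) (h2 : ν Set.univ = μ Set.univ) :
    WpDelta p μ N ≤ Wp p μ ν :=
  iInf₂_le ν ⟨h1, h2⟩

lemma wp_le_cost {p : ℝ} {μ ν : Measure X} {π : Measure (X × X)} (h : IsCoupling μ ν π) :
    Wp p μ ν ≤ (∫⁻ z, edist z.1 z.2 ^ p ∂π) ^ (1 / p) :=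
  iInf₂_le π h

lemma wpDelta_anti {p : ℝ} {μ : Measure X} {M N : ℕ} (h : M ≤ N) :
    WpDelta p μ N ≤ WpDelta p μ M := by
  refine le_iInf₂ fun ν hν => ?_
  obtain ⟨⟨S, hS, hS0⟩, hm⟩ := hν
  exact wpDelta_le_wp ⟨S, hS.trans h, hS0⟩ hm

variable {p a₁ a₂ : ℝ} {μ₁ μ₂ : Measure X} [IsProbabilityMeasure μ₁] [IsProbabilityMeasure μ₂]

lemma finiteCombo (a₁ a₂ : ℝ) (μ₁ μ₂ : Measure X) [IsProbabilityMeasure μ₁]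
    [IsProbabilityMeasure μ₂] :
    IsFiniteMeasure (ENNReal.ofReal a₁ • μ₁ + ENNReal.ofReal a₂ • μ₂) := by
  constructor
  simp [ENNReal.add_lt_top, ENNReal.ofReal_lt_top]

lemma lower_bound_aux (hp : 1 ≤ p) (ha₁ : 0 < a₁) (ha₂ : 0 < a₂) (N₀ : ℕ) :
    ENNReal.ofReal a₁ ^ (1 / p) * WpDelta p μ₁ N₀ ≤
      WpDelta p (ENNReal.ofReal a₁ • μ₁ + ENNReal.ofReal a₂ • μ₂) N₀ := by
  set α : ℝ≥0∞ := ENNReal.ofReal a₁ with hα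
  set μ : Measure X := α • μ₁ + ENNReal.ofReal a₂ • μ₂ with hμdef
  have hα0 : α ≠ 0 := by simp [hα, ENNReal.ofReal_eq_zero, not_le, ha₁]
  have hαt : α ≠ ⊤ := ENNReal.ofReal_ne_top
  have hA0 : (α : ℝ≥0∞) ^ (1 / p) ≠ 0 := by
    simp [ENNReal.rpow_eq_zero_iff, hα0, hαt]
  have hAt : (α : ℝ≥0∞) ^ (1 / p) ≠ ⊤ := by
    exact ENNReal.rpow_ne_top_of_nonneg (by positivity) hαt
  haveI : IsFiniteMeasure μ := finiteCombo a₁ a₂ μ₁ μ₂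
  haveI : IsFiniteMeasure (α • μ₁ : Measure X) := by
    constructor
    simp [Measure.smul_apply, hαt.lt_top, ENNReal.mul_lt_top, hα, ENNReal.ofReal_lt_top]
  refine le_iInf₂ fun ν hν => ?_
  rw [Wp]
  refine le_iInf₂ fun π hπ => ?_
  obtain ⟨S, hScard, hSν⟩ := hν.1
  have hle : (α • μ₁ : Measure X) ≤ μ := Measure.le_add_right le_rfl
  have hac : (α • μ₁ : Measure X) ≪ μ := hle.absolutelyContinuous
  set g : X → ℝ≥0∞ := (α • μ₁ : Measure X).rnDeriv μ with hg
  have hgm : Measurable g := Measure.measurable_rnDeriv _ _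
  have hgd : μ.withDensity g = α • μ₁ := Measure.withDensity_rnDeriv_eq _ _ hac
  have hg1 : g ≤ᵐ[μ] 1 := Measure.rnDeriv_le_one_of_le hle
  set π₁ : Measure (X × X) := π.withDensity (fun z => g z.1) with hπ₁
  have hfst : π.map Prod.fst = μ := hπ.1
  have hπ₁fst : π₁.map Prod.fst = α • μ₁ := by
    ext s hs
    rw [Measure.map_apply measurable_fst hs, hπ₁,
      withDensity_apply _ (measurable_fst hs), ← setLIntegral_map hs hgm measurable_fst,
      hfst, ← withDensity_apply _ hs, hgd]
  have hgπ : ∀ᵐ z ∂π, g z.1 ≤ 1 := by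
    have hq : Measure.QuasiMeasurePreserving (Prod.fst : X × X → X) π μ :=
      ⟨measurable_fst, hfst ▸ Measure.AbsolutelyContinuous.rfl⟩
    exact hq.tendsto_ae.eventually hg1
  have hπ₁le : π₁ ≤ π := by
    rw [Measure.le_iff]
    intro s hs
    rw [hπ₁, withDensity_apply _ hs]
    calc ∫⁻ z in s, g z.1 ∂π ≤ ∫⁻ _ in s, 1 ∂π :=
          lintegral_mono_ae (ae_restrict_of_ae hgπ)
      _ = π s := by simp
  set ν' : Measure X := π₁.map Prod.snd with hν'
  have hν'le : ν' ≤ π.map Prod.snd := Measure.map_mono hπ₁le measurable_snd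
  have hν'S : ν' ((S : Set X))ᶜ = 0 := by
    refine le_antisymm ?_ zero_le
    calc ν' ((S : Set X))ᶜ ≤ (π.map Prod.snd) ((S : Set X))ᶜ := hν'le _
      _ = 0 := by rw [hπ.2, hSν]
  have hπ₁univ : π₁ Set.univ = α := by
    have h1 : π₁ Set.univ = (π₁.map Prod.fst) Set.univ := by
      rw [Measure.map_apply measurable_fst MeasurableSet.univ, Set.preimage_univ]
    rw [h1, hπ₁fst]
    simp [Measure.smul_apply]
  have hν'univ : ν' Set.univ = α := by
    rw [hν', Measure.map_apply measurable_snd MeasurableSet.univ, Set.preimage_univ, hπ₁univ]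
  have hcoup : IsCoupling μ₁ (α⁻¹ • ν') (α⁻¹ • π₁) := by
    constructor
    · rw [Measure.map_smul, hπ₁fst, smul_smul, ENNReal.inv_mul_cancel hα0 hαt, one_smul]
    · rw [Measure.map_smul]
  have h1 : WpDelta p μ₁ N₀ ≤ Wp p μ₁ (α⁻¹ • ν') := by
    refine wpDelta_le_wp ⟨S, hScard, ?_⟩ ?_
    · rw [Measure.smul_apply, hν'S, smul_zero]
    · rw [Measure.smul_apply, hν'univ, smul_eq_mul, ENNReal.inv_mul_cancel hα0 hαt,
        measure_univ]
  have h2 : Wp p μ₁ (α⁻¹ • ν') ≤ (α⁻¹ * ∫⁻ z, edist z.1 z.2 ^ p ∂π₁) ^ (1 / p) := by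
    have := wp_le_cost (p := p) hcoup
    rwa [lintegral_smul_measure] at this
  have h3 : (∫⁻ z, edist z.1 z.2 ^ p ∂π₁) ≤ ∫⁻ z, edist z.1 z.2 ^ p ∂π :=
    lintegral_mono' hπ₁le le_rfl
  calc α ^ (1 / p) * WpDelta p μ₁ N₀
      ≤ α ^ (1 / p) * (α⁻¹ * ∫⁻ z, edist z.1 z.2 ^ p ∂π₁) ^ (1 / p) :=
        mul_le_mul_right (h1.trans h2) _
    _ = α ^ (1 / p) * ((α ^ (1 / p))⁻¹ * (∫⁻ z, edist z.1 z.2 ^ p ∂π₁) ^ (1 / p)) := by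
        rw [ENNReal.mul_rpow_of_nonneg _ _ (by positivity), ENNReal.inv_rpow]
    _ = (∫⁻ z, edist z.1 z.2 ^ p ∂π₁) ^ (1 / p) := by
        rw [← mul_assoc, ENNReal.mul_inv_cancel hA0 hAt, one_mul]
    _ ≤ (∫⁻ z, edist z.1 z.2 ^ p ∂π) ^ (1 / p) :=
        ENNReal.rpow_le_rpow h3 (by positivity)

lemma core_step (hp : 1 ≤ p) (ha₁ : 0 < a₁) (ha₂ : 0 < a₂) {M N : ℕ} (hMN : 2 * M ≤ N)
    {ν₁ ν₂ : Measure X}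
    (h₁ : FinSupported M ν₁ ∧ ν₁ Set.univ = μ₁ Set.univ)
    (h₂ : FinSupported M ν₂ ∧ ν₂ Set.univ = μ₂ Set.univ)
    {π₁ π₂ : Measure (X × X)} (hπ₁ : IsCoupling μ₁ ν₁ π₁) (hπ₂ : IsCoupling μ₂ ν₂ π₂) :
    WpDelta p (ENNReal.ofReal a₁ • μ₁ + ENNReal.ofReal a₂ • μ₂) N ≤
      ENNReal.ofReal a₁ ^ (1 / p) * (∫⁻ z, edist z.1 z.2 ^ p ∂π₁) ^ (1 / p) +
      ENNReal.ofReal a₂ ^ (1 / p) * (∫⁻ z, edist z.1 z.2 ^ p ∂π₂) ^ (1 / p) := by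
  classical
  have hp0 : (0:ℝ) < p := lt_of_lt_of_le one_pos hp
  have h1p0 : (0:ℝ) ≤ 1 / p := by positivity
  have h1p1 : 1 / p ≤ 1 := by
    rw [div_le_one hp0]; exact hp
  set α : ℝ≥0∞ := ENNReal.ofReal a₁
  set β : ℝ≥0∞ := ENNReal.ofReal a₂
  set ν : Measure X := α • ν₁ + β • ν₂ with hνdef
  set Pi : Measure (X × X) := α • π₁ + β • π₂ with hPidef
  obtain ⟨⟨S₁, hS₁c, hS₁0⟩, hm₁⟩ := h₁
  obtain ⟨⟨S₂, hS₂c, hS₂0⟩, hm₂⟩ := h₂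
  have hfin : FinSupported N ν := by
    refine ⟨S₁ ∪ S₂, le_trans (Finset.card_union_le _ _) (by omega), ?_⟩
    have e1 : ν₁ ((↑(S₁ ∪ S₂) : Set X))ᶜ = 0 :=
      measure_mono_null (by simp [Set.compl_subset_compl, Set.subset_union_left]) hS₁0
    have e2 : ν₂ ((↑(S₁ ∪ S₂) : Set X))ᶜ = 0 :=
      measure_mono_null (by simp [Set.compl_subset_compl, Set.subset_union_right]) hS₂0
    simp only [hνdef, Measure.add_apply, Measure.smul_apply, smul_eq_mul, Finset.coe_union,
      Set.compl_union, add_eq_zero, mul_eq_zero]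
    exact ⟨Or.inr (measure_mono_null Set.inter_subset_left hS₁0),
      Or.inr (measure_mono_null Set.inter_subset_right hS₂0)⟩
  have hmass : ν Set.univ = (α • μ₁ + β • μ₂ : Measure X) Set.univ := by
    simp [hνdef, Measure.add_apply, Measure.smul_apply, hm₁, hm₂]
  have hcoup : IsCoupling (α • μ₁ + β • μ₂) ν Pi := by
    constructor
    · rw [hPidef, Measure.map_add _ _ measurable_fst, Measure.map_smul, Measure.map_smul,
        hπ₁.1, hπ₂.1]
    · rw [hPidef, Measure.map_add _ _ measurable_snd, Measure.map_smul, Measure.map_smul,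
        hπ₁.2, hπ₂.2]
  have hcost : (∫⁻ z, edist z.1 z.2 ^ p ∂Pi)
      = α * (∫⁻ z, edist z.1 z.2 ^ p ∂π₁) + β * (∫⁻ z, edist z.1 z.2 ^ p ∂π₂) := by
    rw [hPidef, lintegral_add_measure, lintegral_smul_measure, lintegral_smul_measure,
      smul_eq_mul, smul_eq_mul]
  calc WpDelta p (α • μ₁ + β • μ₂) N ≤ Wp p (α • μ₁ + β • μ₂) ν := wpDelta_le_wp hfin hmass
    _ ≤ (∫⁻ z, edist z.1 z.2 ^ p ∂Pi) ^ (1 / p) := wp_le_cost hcoup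
    _ = (α * (∫⁻ z, edist z.1 z.2 ^ p ∂π₁) + β * (∫⁻ z, edist z.1 z.2 ^ p ∂π₂)) ^ (1 / p) := by
        rw [hcost]
    _ ≤ (α * (∫⁻ z, edist z.1 z.2 ^ p ∂π₁)) ^ (1 / p)
        + (β * (∫⁻ z, edist z.1 z.2 ^ p ∂π₂)) ^ (1 / p) :=
        ENNReal.rpow_add_le_add_rpow _ _ h1p0 h1p1
    _ = _ := by
        rw [ENNReal.mul_rpow_of_nonneg _ _ h1p0, ENNReal.mul_rpow_of_nonneg _ _ h1p0]

lemma upper_bound_aux (hp : 1 ≤ p) (ha₁ : 0 < a₁) (ha₂ : 0 < a₂) {M N : ℕ} (hMN : 2 * M ≤ N) :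
    WpDelta p (ENNReal.ofReal a₁ • μ₁ + ENNReal.ofReal a₂ • μ₂) N ≤
      ENNReal.ofReal a₁ ^ (1 / p) * WpDelta p μ₁ M +
      ENNReal.ofReal a₂ ^ (1 / p) * WpDelta p μ₂ M := by
  have hA0 : ENNReal.ofReal a₁ ^ (1 / p) ≠ 0 := by
    simp [ENNReal.rpow_eq_zero_iff, ENNReal.ofReal_eq_zero, not_le, ha₁]
  have hAt : ENNReal.ofReal a₁ ^ (1 / p) ≠ ⊤ :=
    ENNReal.rpow_ne_top_of_nonneg (by positivity) ENNReal.ofReal_ne_top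
  have hB0 : ENNReal.ofReal a₂ ^ (1 / p) ≠ 0 := by
    simp [ENNReal.rpow_eq_zero_iff, ENNReal.ofReal_eq_zero, not_le, ha₂]
  have hBt : ENNReal.ofReal a₂ ^ (1 / p) ≠ ⊤ :=
    ENNReal.rpow_ne_top_of_nonneg (by positivity) ENNReal.ofReal_ne_top
  have key : ∀ (ν₁ : Measure X), (FinSupported M ν₁ ∧ ν₁ Set.univ = μ₁ Set.univ) →
      ∀ (ν₂ : Measure X), (FinSupported M ν₂ ∧ ν₂ Set.univ = μ₂ Set.univ) →
      WpDelta p (ENNReal.ofReal a₁ • μ₁ + ENNReal.ofReal a₂ • μ₂) N ≤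
        ENNReal.ofReal a₁ ^ (1 / p) * Wp p μ₁ ν₁ +
        ENNReal.ofReal a₂ ^ (1 / p) * Wp p μ₂ ν₂ := by
    intro ν₁ h₁ ν₂ h₂
    have eq1 : ENNReal.ofReal a₁ ^ (1 / p) * Wp p μ₁ ν₁ +
        ENNReal.ofReal a₂ ^ (1 / p) * Wp p μ₂ ν₂ =
        ⨅ (π₂ : Measure (X × X)) (_ : IsCoupling μ₂ ν₂ π₂)
          (π₁ : Measure (X × X)) (_ : IsCoupling μ₁ ν₁ π₁),
          (ENNReal.ofReal a₁ ^ (1 / p) * (∫⁻ z, edist z.1 z.2 ^ p ∂π₁) ^ (1 / p) +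
           ENNReal.ofReal a₂ ^ (1 / p) * (∫⁻ z, edist z.1 z.2 ^ p ∂π₂) ^ (1 / p)) := by
      simp only [Wp, ENNReal.mul_iInf_of_ne hA0 hAt, ENNReal.mul_iInf_of_ne hB0 hBt,
        ENNReal.iInf_add, ENNReal.add_iInf]
    rw [eq1]
    exact le_iInf₂ fun π₂ hπ₂ => le_iInf₂ fun π₁ hπ₁ =>
      core_step hp ha₁ ha₂ hMN h₁ h₂ hπ₁ hπ₂
  have eq2 : ENNReal.ofReal a₁ ^ (1 / p) * WpDelta p μ₁ M +
      ENNReal.ofReal a₂ ^ (1 / p) * WpDelta p μ₂ M =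
      ⨅ (ν₂ : Measure X) (_ : FinSupported M ν₂ ∧ ν₂ Set.univ = μ₂ Set.univ)
        (ν₁ : Measure X) (_ : FinSupported M ν₁ ∧ ν₁ Set.univ = μ₁ Set.univ),
        (ENNReal.ofReal a₁ ^ (1 / p) * Wp p μ₁ ν₁ +
         ENNReal.ofReal a₂ ^ (1 / p) * Wp p μ₂ ν₂) := by
    simp only [WpDelta, ENNReal.mul_iInf_of_ne hA0 hAt, ENNReal.mul_iInf_of_ne hB0 hBt,
      ENNReal.iInf_add, ENNReal.add_iInf]
  rw [eq2]
  exact le_iInf₂ fun ν₂ h₂ => le_iInf₂ fun ν₁ h₁ => key ν₁ h₁ ν₂ h₂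

end Aux

theorem combination_two_measures
    {X : Type*} [MetricSpace X] [MeasurableSpace X] [BorelSpace X]
    (p : ℝ) (hp : 1 ≤ p)
    (a₁ a₂ : ℝ) (ha₁ : 0 < a₁) (ha₂ : 0 < a₂)
    (μ₁ μ₂ : Measure X) [IsProbabilityMeasure μ₁] [IsProbabilityMeasure μ₂]
    (hμ₁c : ∃ K : Set X, IsCompact K ∧ μ₁ Kᶜ = 0)
    (hμ₂c : ∃ K : Set X, IsCompact K ∧ μ₂ Kᶜ = 0)
    (μ : Measure X) (hμ : μ = ENNReal.ofReal a₁ • μ₁ + ENNReal.ofReal a₂ • μ₂)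
    (c c' : ℝ)
    (hc : ∀ᶠ N : ℕ in atTop, WpDelta p μ₂ N ≤ ENNReal.ofReal c * WpDelta p μ₁ N)
    (hc' : ∀ᶠ N : ℕ in atTop, WpDelta p μ₁ N ≤ ENNReal.ofReal c' * WpDelta p μ₁ (2 * N)) :
    ∃ a b : ℝ, 0 < a ∧ a ≤ b ∧ ∀ᶠ N : ℕ in atTop,
      ENNReal.ofReal a * WpDelta p μ₁ N ≤ WpDelta p μ N ∧
      WpDelta p μ N ≤ ENNReal.ofReal b * WpDelta p μ₁ N := by
  subst hμ
  obtain ⟨n₁, hn₁⟩ := eventually_atTop.1 hc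
  obtain ⟨n₂, hn₂⟩ := eventually_atTop.1 hc'
  set c₀ : ℝ := max c 0 with hc₀
  set c₀' : ℝ := max c' 0 with hc₀'
  refine ⟨a₁ ^ (1 / p),
    max ((a₁ ^ (1 / p) + a₂ ^ (1 / p) * c₀) * (c₀' * c₀')) (a₁ ^ (1 / p)),
    Real.rpow_pos_of_pos ha₁ _, le_max_right _ _, ?_⟩
  rw [eventually_atTop]
  refine ⟨2 * (n₁ + n₂) + 2, fun N hN => ⟨?_, ?_⟩⟩
  · rw [← ENNReal.ofReal_rpow_of_pos ha₁]
    exact lower_bound_aux hp ha₁ ha₂ N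
  · set M : ℕ := N / 2 with hM
    have h2M : 2 * M ≤ N := by omega
    have hMn₁ : n₁ ≤ M := by omega
    have hMn₂ : n₂ ≤ M := by omega
    have h2Mn₂ : n₂ ≤ 2 * M := by omega
    have hN4 : N ≤ 2 * (2 * M) := by omega
    set A : ℝ≥0∞ := ENNReal.ofReal a₁ ^ (1 / p) with hA
    set B : ℝ≥0∞ := ENNReal.ofReal a₂ ^ (1 / p) with hB
    have hchain : WpDelta p μ₁ M ≤
        ENNReal.ofReal c' * (ENNReal.ofReal c' * WpDelta p μ₁ N) := by
      calc WpDelta p μ₁ M ≤ ENNReal.ofReal c' * WpDelta p μ₁ (2 * M) := hn₂ M hMn₂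
        _ ≤ ENNReal.ofReal c' * (ENNReal.ofReal c' * WpDelta p μ₁ (2 * (2 * M))) :=
            mul_le_mul_right (hn₂ (2 * M) h2Mn₂) _
        _ ≤ ENNReal.ofReal c' * (ENNReal.ofReal c' * WpDelta p μ₁ N) :=
            mul_le_mul_right (mul_le_mul_right (wpDelta_anti hN4) _) _
    calc WpDelta p (ENNReal.ofReal a₁ • μ₁ + ENNReal.ofReal a₂ • μ₂) N
        ≤ A * WpDelta p μ₁ M + B * WpDelta p μ₂ M := upper_bound_aux hp ha₁ ha₂ h2M
      _ ≤ A * WpDelta p μ₁ M + B * (ENNReal.ofReal c * WpDelta p μ₁ M) :=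
          add_le_add_right (mul_le_mul_right (hn₁ M hMn₁) _) _
      _ = (A + B * ENNReal.ofReal c) * WpDelta p μ₁ M := by ring
      _ ≤ (A + B * ENNReal.ofReal c) *
          (ENNReal.ofReal c' * (ENNReal.ofReal c' * WpDelta p μ₁ N)) :=
          mul_le_mul_right hchain _
      _ = ((A + B * ENNReal.ofReal c) * (ENNReal.ofReal c' * ENNReal.ofReal c')) *
          WpDelta p μ₁ N := by ring
      _ ≤ ENNReal.ofReal (max ((a₁ ^ (1 / p) + a₂ ^ (1 / p) * c₀) * (c₀' * c₀'))
          (a₁ ^ (1 / p))) * WpDelta p μ₁ N := by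
          refine mul_le_mul_left ?_ _
          have e1 : A = ENNReal.ofReal (a₁ ^ (1 / p)) :=
            ENNReal.ofReal_rpow_of_pos ha₁
          have e2 : B = ENNReal.ofReal (a₂ ^ (1 / p)) :=
            ENNReal.ofReal_rpow_of_pos ha₂
          have hcle : ENNReal.ofReal c ≤ ENNReal.ofReal c₀ :=
            ENNReal.ofReal_le_ofReal (le_max_left _ _)
          have hc'le : ENNReal.ofReal c' ≤ ENNReal.ofReal c₀' :=
            ENNReal.ofReal_le_ofReal (le_max_left _ _)
          calc (A + B * ENNReal.ofReal c) * (ENNReal.ofReal c' * ENNReal.ofReal c')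
              ≤ (A + B * ENNReal.ofReal c₀) * (ENNReal.ofReal c₀' * ENNReal.ofReal c₀') :=
                mul_le_mul' (add_le_add_right (mul_le_mul_right hcle _) _)
                  (mul_le_mul' hc'le hc'le)
            _ = ENNReal.ofReal ((a₁ ^ (1 / p) + a₂ ^ (1 / p) * c₀) * (c₀' * c₀')) := by
                rw [e1, e2, ← ENNReal.ofReal_mul (by positivity),
                  ← ENNReal.ofReal_add (by positivity) (by positivity),
                  ← ENNReal.ofReal_mul (by positivity), ← ENNReal.ofReal_mul (by positivity)]
            _ ≤ _ := ENNReal.ofReal_le_ofReal (le_max_left _ _)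
end
end

section
/- Let p ∈ [1,∞) and let □¹ be the uniform (Lebesgue) probability measure on [0,1] ⊂ ℝ. Then N · W_p(□¹, Δ_N) converges to (p+1)^{-1/p}/2 as N → ∞; that is, θ(1,p) = (p+1)^{-1/p}/2. -/
open MeasureTheory Metric Filter
open scoped ENNReal

noncomputable section

/-- The uniform (Lebesgue) probability measure on `[0,1] ⊂ ℝ`. -/
def unifInterval : Measure ℝ := volume.restrict (Set.Icc (0 : ℝ) 1)

lemma integral_p_rpow {p : ℝ} (hp : 1 ≤ p) (a : ℝ) :
    ∫ t in (0:ℝ)..a, p * t ^ (p-1) = a ^ p := by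
  have hp0 : p ≠ 0 := by intro h; rw [h] at hp; linarith
  rw [intervalIntegral.integral_const_mul, integral_rpow (Or.inl (by linarith)),
    sub_add_cancel, Real.zero_rpow hp0]
  field_simp
  simp

lemma integral_lower {p : ℝ} (hp : 1 ≤ p) (b : ℝ) (hb : 0 < b) :
    ∫ t in (0:ℝ)..(1/b), (p * t ^ (p-1) - b * p * t ^ p) = (1/b) ^ p / (p+1) := by
  have hp1 : p + 1 ≠ 0 := by linarith
  have hi1 : IntervalIntegrable (fun t : ℝ => p * t ^ (p-1)) volume 0 (1/b) :=
    (intervalIntegral.intervalIntegrable_rpow' (by linarith)).const_mul p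
  have hi2 : IntervalIntegrable (fun t : ℝ => b * p * t ^ p) volume 0 (1/b) :=
    (intervalIntegral.intervalIntegrable_rpow' (by linarith)).const_mul (b * p)
  rw [intervalIntegral.integral_sub hi1 hi2, integral_p_rpow hp,
    intervalIntegral.integral_const_mul, integral_rpow (Or.inl (by linarith : (-1:ℝ) < p)),
    Real.zero_rpow hp1, sub_zero]
  have h1b : (1/b) ^ (p+1) = (1/b) ^ p * (1/b) := by
    rw [Real.rpow_add_one (by positivity : (1:ℝ)/b ≠ 0)]
  rw [h1b]
  have : b * p * ((1 / b) ^ p * (1 / b) / (p + 1)) = p * (1/b)^p / (p+1) := by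
    field_simp
  rw [this]
  field_simp
  ring

lemma ofReal_pow_div {p : ℝ} (hp : 1 ≤ p) (a : ℝ) (ha : 0 ≤ a) :
    (ENNReal.ofReal (a ^ p / (p+1))) ^ (1/p) = ENNReal.ofReal (a * (p+1) ^ (-(1/p))) := by
  have hp0 : (0:ℝ) < p := by linarith
  have hp1 : (0:ℝ) < p + 1 := by linarith
  rw [ENNReal.ofReal_rpow_of_nonneg (by positivity) (by positivity)]
  congr 1
  rw [Real.div_rpow (by positivity) hp1.le, one_div, Real.rpow_rpow_inv ha hp0.ne',
    Real.rpow_neg hp1.le, div_eq_mul_inv]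

lemma hμuniv : unifInterval Set.univ = 1 := by
  simp [unifInterval, Real.volume_Icc]

lemma lower_bound {p : ℝ} (hp : 1 ≤ p) (N : ℕ) (hN : 1 ≤ N) :
    ENNReal.ofReal ((1/(2*(N:ℝ))) * (p+1) ^ (-(1/p))) ≤ WpDelta p unifInterval N := by
  have hp0 : (0:ℝ) < p := by linarith
  set b : ℝ := 2*(N:ℝ) with hbdef
  have hb : 0 < b := by positivity
  set a : ℝ := 1/b with hadef
  have ha : 0 < a := by positivity
  refine le_iInf fun ν => le_iInf fun hν => le_iInf fun π => le_iInf fun hπ => ?_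
  obtain ⟨S, hScard, hSnull⟩ := hν.1
  have hνuniv : ν Set.univ = 1 := by rw [hν.2, hμuniv]
  have hSne : (S : Set ℝ).Nonempty := by
    rcases S.eq_empty_or_nonempty with h | h
    · exfalso
      rw [h] at hSnull
      simp only [Finset.coe_empty, Set.compl_empty, hνuniv] at hSnull
      exact one_ne_zero hSnull
    · exact h
  set f : ℝ → ℝ := fun x => infDist x (S : Set ℝ) with hfdef
  have hf_cont : Continuous f := continuous_infDist_pt _
  -- the key lower bound on the transport cost
  have key : ENNReal.ofReal (a ^ p / (p+1)) ≤ ∫⁻ z, edist z.1 z.2 ^ p ∂π := by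
    -- Step A : a.e. the second coordinate is in S
    have hae : ∀ᵐ z ∂π, z.2 ∈ (S : Set ℝ) := by
      have h0 : π (Prod.snd ⁻¹' ((S : Set ℝ)ᶜ)) = 0 := by
        rw [← Measure.map_apply measurable_snd S.measurableSet.compl, hπ.2]
        exact hSnull
      refine (ae_iff.mpr ?_)
      exact h0
    have stepA : ∫⁻ z, ENNReal.ofReal (f z.1 ^ p) ∂π ≤ ∫⁻ z, edist z.1 z.2 ^ p ∂π := by
      refine lintegral_mono_ae (hae.mono fun z hz => ?_)
      rw [← ENNReal.ofReal_rpow_of_nonneg infDist_nonneg hp0.le]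
      refine ENNReal.rpow_le_rpow ?_ hp0.le
      have h1 : ENNReal.ofReal (f z.1) = EMetric.infEdist z.1 (S : Set ℝ) := by
        rw [hfdef]
        simp only [infDist]
        exact ENNReal.ofReal_toReal (infEdist_ne_top hSne)
      rw [h1]
      exact EMetric.infEdist_le_edist_of_mem hz
    -- Step B : marginal
    have hgm : Measurable fun x : ℝ => ENNReal.ofReal (f x ^ p) :=
      ENNReal.measurable_ofReal.comp
        ((Real.continuous_rpow_const hp0.le).comp hf_cont).measurable
    have stepB : ∫⁻ x, ENNReal.ofReal (f x ^ p) ∂unifInterval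
        = ∫⁻ z, ENNReal.ofReal (f z.1 ^ p) ∂π := by
      rw [← hπ.1, lintegral_map hgm measurable_fst]
    -- Step C : layer cake
    have stepC : ∫⁻ x, ENNReal.ofReal (f x ^ p) ∂unifInterval
        = ∫⁻ t in Set.Ioi 0, unifInterval {x | t ≤ f x} * ENNReal.ofReal (p * t ^ (p-1)) := by
      have lc := lintegral_comp_eq_lintegral_meas_le_mul unifInterval
        (f := f) (g := fun t => p * t ^ (p-1))
        (Filter.Eventually.of_forall fun x => infDist_nonneg)
        hf_cont.measurable.aemeasurable
        (fun t _ => (intervalIntegral.intervalIntegrable_rpow' (by linarith)).const_mul p)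
        ((ae_restrict_iff' measurableSet_Ioi).mpr (Filter.Eventually.of_forall
          (fun t ht => by have h't : (0:ℝ) < t := ht; positivity)))
      rw [← lc]
      refine lintegral_congr fun x => ?_
      rw [integral_p_rpow hp]
    -- Step E : pointwise bound on (0, a]
    have stepE : ∀ t ∈ Set.Ioc (0:ℝ) a,
        ENNReal.ofReal (p * t ^ (p-1) - b * p * t ^ p)
          ≤ unifInterval {x | t ≤ f x} * ENNReal.ofReal (p * t ^ (p-1)) := by
      intro t ht
      have ht0 : (0:ℝ) < t := ht.1
      have hbt : b * t ≤ 1 := by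
        have := ht.2
        rw [hadef] at this
        calc b * t ≤ b * (1/b) := by nlinarith
          _ = 1 := by field_simp
      have hgt : p * t ^ (p-1) - b * p * t ^ p = (1 - b*t) * (p * t ^ (p-1)) := by
        have htp : t ^ p = t ^ (p-1) * t := by
          rw [← Real.rpow_add_one ht0.ne' (p-1), sub_add_cancel]
        rw [htp]; ring
      rw [hgt, ENNReal.ofReal_mul (by linarith)]
      refine mul_le_mul_left ?_ _
      -- ofReal (1 - b*t) ≤ unifInterval {x | t ≤ f x}
      have hopen : MeasurableSet {x : ℝ | f x < t} :=
        (isOpen_lt hf_cont continuous_const).measurableSet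
      have hfin : unifInterval {x : ℝ | f x < t} ≠ ⊤ :=
        ne_top_of_le_ne_top (by rw [hμuniv]; exact ENNReal.one_ne_top) (measure_mono (Set.subset_univ _))
      have hcompl : {x : ℝ | t ≤ f x} = {x : ℝ | f x < t}ᶜ := by
        ext x; simp [not_lt]
      have hsub : {x : ℝ | f x < t} ⊆ ⋃ s ∈ S, Metric.ball s t := by
        intro x hx
        obtain ⟨y, hy, hxy⟩ := (infDist_lt_iff hSne).mp hx
        exact Set.mem_biUnion hy hxy
      have hball : unifInterval {x : ℝ | f x < t} ≤ (N : ℝ≥0∞) * ENNReal.ofReal (2*t) := by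
        calc unifInterval {x : ℝ | f x < t} ≤ volume {x : ℝ | f x < t} := by
              rw [unifInterval, Measure.restrict_apply hopen]
              exact measure_mono Set.inter_subset_left
          _ ≤ volume (⋃ s ∈ S, Metric.ball s t) := measure_mono hsub
          _ ≤ ∑ s ∈ S, volume (Metric.ball s t) := measure_biUnion_finset_le S _
          _ = S.card * ENNReal.ofReal (2*t) := by
              simp [Real.volume_ball, Finset.sum_const, nsmul_eq_mul]
          _ ≤ (N : ℝ≥0∞) * ENNReal.ofReal (2*t) :=
              mul_le_mul_left (by exact_mod_cast hScard) _
      have hN2t : (N : ℝ≥0∞) * ENNReal.ofReal (2*t) = ENNReal.ofReal (b*t) := by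
        rw [← ENNReal.ofReal_natCast N, ← ENNReal.ofReal_mul (Nat.cast_nonneg N)]
        congr 1
        rw [hbdef]; ring
      calc ENNReal.ofReal (1 - b*t) = 1 - ENNReal.ofReal (b*t) := by
            rw [ENNReal.ofReal_sub _ (by positivity), ENNReal.ofReal_one]
        _ ≤ 1 - unifInterval {x : ℝ | f x < t} := by
            refine tsub_le_tsub_left ?_ 1
            rw [← hN2t]; exact hball
        _ = unifInterval {x : ℝ | t ≤ f x} := by
            rw [hcompl, measure_compl hopen hfin, hμuniv]
    -- Step F : the explicit integral
    have hi : IntervalIntegrable (fun t : ℝ => p * t ^ (p-1) - b * p * t ^ p) volume 0 a :=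
      ((intervalIntegral.intervalIntegrable_rpow' (by linarith)).const_mul p).sub
        ((intervalIntegral.intervalIntegrable_rpow' (by linarith)).const_mul (b*p))
    have hgnn : ∀ t ∈ Set.Ioc (0:ℝ) a, 0 ≤ p * t ^ (p-1) - b * p * t ^ p := by
      intro t ht
      have ht0 : (0:ℝ) < t := ht.1
      have hbt : b * t ≤ 1 := by
        have := ht.2
        rw [hadef] at this
        calc b * t ≤ b * (1/b) := by nlinarith
          _ = 1 := by field_simp
      have htp : t ^ p = t ^ (p-1) * t := by
        rw [← Real.rpow_add_one ht0.ne' (p-1), sub_add_cancel]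
      have h1 : p * t ^ (p-1) - b * p * t ^ p = (1 - b*t) * (p * t ^ (p-1)) := by
        rw [htp]; ring
      rw [h1]
      have h2 : (0:ℝ) ≤ t ^ (p-1) := Real.rpow_nonneg ht0.le _
      exact mul_nonneg (by linarith) (mul_nonneg hp0.le h2)
    have stepF : ENNReal.ofReal (a ^ p / (p+1))
        ≤ ∫⁻ t in Set.Ioc 0 a, unifInterval {x | t ≤ f x} * ENNReal.ofReal (p * t ^ (p-1)) := by
      have heq : ENNReal.ofReal (a ^ p / (p+1))
          = ∫⁻ t in Set.Ioc 0 a, ENNReal.ofReal (p * t ^ (p-1) - b * p * t ^ p) := by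
        rw [← ofReal_integral_eq_lintegral_ofReal (hi.1)
          ((ae_restrict_iff' measurableSet_Ioc).mpr (Filter.Eventually.of_forall hgnn))]
        congr 1
        rw [← intervalIntegral.integral_of_le ha.le]
        rw [hadef, integral_lower hp b hb]
      rw [heq]
      exact lintegral_mono_ae ((ae_restrict_iff' measurableSet_Ioc).mpr
        (Filter.Eventually.of_forall stepE))
    calc ENNReal.ofReal (a ^ p / (p+1))
        ≤ ∫⁻ t in Set.Ioc 0 a, unifInterval {x | t ≤ f x} * ENNReal.ofReal (p * t ^ (p-1)) :=
          stepF
      _ ≤ ∫⁻ t in Set.Ioi 0, unifInterval {x | t ≤ f x} * ENNReal.ofReal (p * t ^ (p-1)) :=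
          lintegral_mono_set Set.Ioc_subset_Ioi_self
      _ = ∫⁻ x, ENNReal.ofReal (f x ^ p) ∂unifInterval := stepC.symm
      _ = ∫⁻ z, ENNReal.ofReal (f z.1 ^ p) ∂π := stepB
      _ ≤ ∫⁻ z, edist z.1 z.2 ^ p ∂π := stepA
  calc ENNReal.ofReal (a * (p+1) ^ (-(1/p)))
      = (ENNReal.ofReal (a ^ p / (p+1))) ^ (1/p) := (ofReal_pow_div hp a ha.le).symm
    _ ≤ (∫⁻ z, edist z.1 z.2 ^ p ∂π) ^ (1/p) := ENNReal.rpow_le_rpow key (by positivity)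

lemma integral_abs_rpow {p : ℝ} (hp : 1 ≤ p) (a : ℝ) (ha : 0 ≤ a) :
    ∫ x in (-a)..a, |x| ^ p = 2 * a ^ (p+1) / (p+1) := by
  have hp1 : p + 1 ≠ 0 := by linarith
  have h1 : ∫ x in (0:ℝ)..a, |x| ^ p = a ^ (p+1) / (p+1) := by
    rw [intervalIntegral.integral_congr_ae ?_ ,
      integral_rpow (Or.inl (by linarith : (-1:ℝ) < p)), Real.zero_rpow hp1, sub_zero]
    · filter_upwards with x hx
      rw [Set.uIoc_of_le ha] at hx
      rw [abs_of_pos hx.1]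
  have h2 : ∫ x in (-a)..(0:ℝ), |x| ^ p = a ^ (p+1) / (p+1) := by
    have := intervalIntegral.integral_comp_neg (a := (0:ℝ)) (b := a) (fun x => |x| ^ p)
    simp only [abs_neg, neg_zero] at this
    rw [← this, h1]
  have hInt : ∀ (u v : ℝ), IntervalIntegrable (fun x => |x| ^ p) volume u v := by
    intro u v
    exact ((Real.continuous_rpow_const (by linarith)).comp continuous_abs).intervalIntegrable _ _
  rw [← intervalIntegral.integral_add_adjacent_intervals (hInt (-a) 0) (hInt 0 a), h1, h2]
  ring

lemma upper_bound {p : ℝ} (hp : 1 ≤ p) (N : ℕ) (hN : 1 ≤ N) :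
    WpDelta p unifInterval N ≤ ENNReal.ofReal ((1/(2*(N:ℝ))) * (p+1) ^ (-(1/p))) := by
  have hp0 : (0:ℝ) < p := by linarith
  set n : ℝ := (N:ℝ) with hndef
  have hn : 0 < n := by
    rw [hndef]; exact_mod_cast Nat.pos_of_ne_zero (by omega)
  set a : ℝ := 1/(2*n) with hadef
  have ha : 0 < a := by positivity
  set q : ℝ → ℝ := fun x => (2*((⌊x*n⌋:ℤ):ℝ)+1)/(2*n) with hqdef
  have hq_meas : Measurable q := by
    have h1 : Measurable fun x : ℝ => ((⌊x*n⌋:ℤ):ℝ) :=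
      measurable_from_top.comp (Int.measurable_floor.comp (measurable_id.mul_const n))
    exact ((h1.const_mul 2).add_const 1).div_const _
  have hq_close : ∀ x : ℝ, |x - q x| ≤ a := by
    intro x
    have hfr1 : 0 ≤ Int.fract (x*n) := Int.fract_nonneg _
    have hfr2 : Int.fract (x*n) < 1 := Int.fract_lt_one _
    have hx : x - q x = (2*Int.fract (x*n) - 1)/(2*n) := by
      simp only [hqdef]
      field_simp
      have h := Int.self_sub_floor (x*n)
      linarith
    rw [hx, hadef, abs_div, abs_of_pos (by positivity : (0:ℝ) < 2*n)]
    gcongr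
    rw [abs_le]
    constructor <;> linarith
  set S : Finset ℝ := (Finset.range N).image (fun i : ℕ => (2*(i:ℝ)+1)/(2*n)) with hSdef
  have hmem : ∀ x ∈ Set.Ico (0:ℝ) 1, q x ∈ (S : Set ℝ) := by
    intro x hx
    have hx0 : 0 ≤ x*n := mul_nonneg hx.1 hn.le
    have hfl0 : 0 ≤ ⌊x*n⌋ := Int.floor_nonneg.mpr hx0
    have hflN : ⌊x*n⌋ < (N:ℤ) := by
      rw [Int.floor_lt]
      push_cast
      calc x * n < 1 * n := by
            exact mul_lt_mul_of_pos_right hx.2 hn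
        _ = n := one_mul n
      -- n = N
    set k : ℕ := ⌊x*n⌋.toNat with hkdef
    have hk : ((k:ℤ):ℝ) = ((⌊x*n⌋:ℤ):ℝ) := by
      rw [hkdef]; norm_cast; exact Int.toNat_of_nonneg hfl0
    have hkN : k < N := by
      rw [hkdef]; omega
    refine Finset.mem_coe.mpr (Finset.mem_image.mpr ⟨k, Finset.mem_range.mpr hkN, ?_⟩)
    rw [hqdef]
    push_cast at hk ⊢
    rw [hk]
  set ν : Measure ℝ := unifInterval.map q with hνdef
  set π : Measure (ℝ × ℝ) := unifInterval.map (fun x => (x, q x)) with hπdef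
  have hπm : Measurable fun x : ℝ => (x, q x) := measurable_id.prodMk hq_meas
  have hcoup : IsCoupling unifInterval ν π := by
    constructor
    · rw [hπdef, Measure.map_map measurable_fst hπm]
      have : (Prod.fst ∘ fun x : ℝ => (x, q x)) = id := rfl
      rw [this, Measure.map_id]
    · rw [hπdef, hνdef, Measure.map_map measurable_snd hπm]
      rfl
  have hfin : FinSupported N ν := by
    refine ⟨S, ?_, ?_⟩
    · exact (Finset.card_image_le).trans (by simp)
    · rw [hνdef, Measure.map_apply hq_meas S.measurableSet.compl, unifInterval,
        Measure.restrict_apply' measurableSet_Icc]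
      have hsub : q ⁻¹' ((S:Set ℝ)ᶜ) ∩ Set.Icc 0 1 ⊆ {1} := by
        rintro x ⟨hx1, hx2⟩
        by_contra hne
        have hx' : x ∈ Set.Ico (0:ℝ) 1 :=
          ⟨hx2.1, lt_of_le_of_ne hx2.2 (by intro h; exact hne (by simp [h]))⟩
        exact hx1 (hmem x hx')
      refine le_antisymm (le_trans (measure_mono hsub) (by simp)) zero_le
  have hmass : ν Set.univ = unifInterval Set.univ := by
    rw [hνdef, Measure.map_apply hq_meas MeasurableSet.univ, Set.preimage_univ]
  -- the transport cost
  set F : ℝ → ℝ := fun x => |x - q x| ^ p with hFdef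
  have hFmeas : Measurable F :=
    (Real.continuous_rpow_const hp0.le).measurable.comp (measurable_id.sub hq_meas).abs
  have hFnn : ∀ x, 0 ≤ F x := fun x => Real.rpow_nonneg (abs_nonneg _) _
  have hFbd : ∀ x, ‖F x‖ ≤ a ^ p := by
    intro x
    rw [Real.norm_eq_abs, abs_of_nonneg (hFnn x)]
    exact Real.rpow_le_rpow (abs_nonneg _) (hq_close x) hp0.le
  have hcell : ∀ i : ℕ, i < N → ∫ x in ((i:ℝ)/n)..(((i:ℝ)+1)/n), F x = 2 * a ^ (p+1) / (p+1) := by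
    intro i hi
    set c : ℝ := (2*(i:ℝ)+1)/(2*n) with hcdef
    have hle : (i:ℝ)/n ≤ ((i:ℝ)+1)/n := by gcongr; linarith
    have hstep : ∫ x in ((i:ℝ)/n)..(((i:ℝ)+1)/n), F x
        = ∫ x in ((i:ℝ)/n)..(((i:ℝ)+1)/n), |x - c| ^ p := by
      refine intervalIntegral.integral_congr_ae ?_
      have hne : ∀ᵐ x : ℝ ∂volume, x ≠ ((i:ℝ)+1)/n := by
        rw [ae_iff]
        have : {x : ℝ | ¬ x ≠ ((i:ℝ)+1)/n} = {((i:ℝ)+1)/n} := by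
          ext y; simp
        rw [this]
        exact measure_singleton _
      filter_upwards [hne] with x hx hxmem
      rw [Set.uIoc_of_le hle] at hxmem
      have h1 : (i:ℝ)/n < x := hxmem.1
      have h2 : x < ((i:ℝ)+1)/n := lt_of_le_of_ne hxmem.2 hx
      have hfl : ⌊x*n⌋ = (i:ℤ) := by
        rw [Int.floor_eq_iff]
        constructor
        · push_cast
          rw [div_lt_iff₀ hn] at h1
          linarith
        · push_cast
          rw [lt_div_iff₀ hn] at h2
          linarith
      rw [hFdef, hqdef]
      simp only
      rw [hfl, hcdef]
      push_cast
      ring_nf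
    rw [hstep, intervalIntegral.integral_comp_sub_right (fun u => |u| ^ p) c]
    have e1 : (i:ℝ)/n - c = -a := by
      rw [hcdef, hadef]; field_simp; ring
    have e2 : ((i:ℝ)+1)/n - c = a := by
      rw [hcdef, hadef]; field_simp; ring
    rw [e1, e2, integral_abs_rpow hp a ha.le]
  have hIntOn : ∀ u v : ℝ, IntervalIntegrable F volume u v := by
    intro u v
    have key : ∀ w z : ℝ, IntegrableOn F (Set.Ioc w z) volume := by
      intro w z
      have : IsFiniteMeasure (volume.restrict (Set.Ioc w z)) :=
        ⟨by rw [Measure.restrict_apply_univ]; exact measure_Ioc_lt_top⟩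
      exact Integrable.mono' (integrable_const (a^p))
        hFmeas.aestronglyMeasurable.restrict (ae_of_all _ hFbd)
    exact ⟨key _ _, key _ _⟩
  have hsum : ∫ x in (0:ℝ)..1, F x = a ^ p / (p+1) := by
    have hadj := intervalIntegral.sum_integral_adjacent_intervals
      (a := fun i : ℕ => (i:ℝ)/n) (n := N) (μ := volume) (f := F)
      (fun k _ => hIntOn _ _)
    have h1 : ((N:ℕ):ℝ)/n = 1 := by
      rw [hndef]; field_simp
    simp only [Nat.cast_zero, zero_div, h1] at hadj
    rw [← hadj]
    have : ∀ i ∈ Finset.range N, ∫ x in ((i:ℝ)/n)..((((i:ℕ)+1:ℕ)):ℝ)/n, F x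
        = 2 * a ^ (p+1) / (p+1) := by
      intro i hi
      have := hcell i (Finset.mem_range.mp hi)
      convert this using 2
      push_cast
      ring
    rw [Finset.sum_congr rfl this, Finset.sum_const, Finset.card_range, nsmul_eq_mul]
    have hap : a ^ (p+1) = a ^ p * a := Real.rpow_add_one ha.ne' p
    rw [hap]
    have hNa : (N:ℝ) * (2 * (a ^ p * a) / (p+1)) = (2 * n * a) * a ^ p / (p+1) := by
      rw [hndef]; ring
    rw [hNa, show 2 * n * a = 1 by rw [hadef]; field_simp, one_mul]
  have hcost : ∫⁻ z, edist z.1 z.2 ^ p ∂π = ENNReal.ofReal (a ^ p / (p+1)) := by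
    have hmeasg : Measurable fun z : ℝ × ℝ => edist z.1 z.2 ^ p :=
      ENNReal.continuous_rpow_const.measurable.comp measurable_edist
    rw [hπdef, lintegral_map hmeasg hπm]
    have hpt : ∀ x : ℝ, edist x (q x) ^ p = ENNReal.ofReal (F x) := by
      intro x
      rw [edist_dist, Real.dist_eq, ENNReal.ofReal_rpow_of_nonneg (abs_nonneg _) hp0.le]
    rw [lintegral_congr hpt]
    have : IsFiniteMeasure unifInterval := ⟨by rw [hμuniv]; exact ENNReal.one_lt_top⟩
    have hFint : Integrable F unifInterval :=
      Integrable.mono' (integrable_const (a^p)) hFmeas.aestronglyMeasurable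
        (ae_of_all _ hFbd)
    rw [← ofReal_integral_eq_lintegral_ofReal hFint (ae_of_all _ hFnn)]
    congr 1
    rw [← hsum, unifInterval, integral_Icc_eq_integral_Ioc,
      ← intervalIntegral.integral_of_le zero_le_one]
  calc WpDelta p unifInterval N
      ≤ ⨅ (_ : FinSupported N ν ∧ ν Set.univ = unifInterval Set.univ), Wp p unifInterval ν :=
        iInf_le _ ν
    _ ≤ Wp p unifInterval ν := iInf_le _ ⟨hfin, hmass⟩
    _ ≤ (∫⁻ z, edist z.1 z.2 ^ p ∂π) ^ (1/p) :=
        le_trans (iInf_le _ π) (iInf_le _ hcoup)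
    _ = ENNReal.ofReal (a * (p+1) ^ (-(1/p))) := by
        rw [hcost, ofReal_pow_div hp a ha.le]
    _ = ENNReal.ofReal ((1/(2*(N:ℝ))) * (p+1) ^ (-(1/p))) := by rw [hadef, hndef]

theorem theta_one_dim (p : ℝ) (hp : 1 ≤ p) :
    Tendsto (fun N : ℕ => (N : ℝ) * (WpDelta p unifInterval N).toReal)
      atTop (nhds ((p + 1) ^ (-(1 / p)) / 2)) := by
  have hL : 0 ≤ (p + 1) ^ (-(1/p)) := Real.rpow_nonneg (by linarith) _
  have key : ∀ N : ℕ, 1 ≤ N →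
      (N : ℝ) * (WpDelta p unifInterval N).toReal = (p + 1) ^ (-(1 / p)) / 2 := by
    intro N hN
    have heq : WpDelta p unifInterval N
        = ENNReal.ofReal ((1/(2*(N:ℝ))) * (p+1) ^ (-(1/p))) :=
      le_antisymm (upper_bound hp N hN) (lower_bound hp N hN)
    have hNpos : (0:ℝ) < N := by exact_mod_cast Nat.pos_of_ne_zero (by omega)
    rw [heq, ENNReal.toReal_ofReal (by positivity)]
    field_simp
  refine Tendsto.congr' ?_ tendsto_const_nhds
  filter_upwards [eventually_ge_atTop 1] with N hN
  exact (key N hN).symm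
end
end
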